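/- arXiv:1010.6090 — 9 statements merged into one kernel-verified Lean document; each statement's English description precedes it below -/
import Mathlib

section
/- Let λ be a point of the upper half-plane ℂ₊ and 0 < ε < 1. Every point z of the rectangle { z : √(1+ε²)/(√(1+ε²)+√2·ε) ≤ Im z / Im λ ≤ √(1+ε²)/(√(1+ε²)−√2·ε) and |Re(z−λ)|/Im λ ≤ √2·ε/√(1−ε²) } satisfies |(z−λ)/(z−conj λ)| ≤ ε; that is, the rectangle is contained in the pseudohyperbolic disk {z : |b_λ(z)| ≤ ε}, and the four vertices of the rectangle satisfy equality |(z−λ)/(z−conj λ)| = ε. -/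
open Complex

set_option maxHeartbeats 1000000 in
/-- the rectangle is inscribed in the pseudohyperbolic disk
`{z : |b_λ(z)| ≤ ε}`, and the four vertices lie on its boundary circle. -/
theorem rectangle_inscribed_in_pseudohyperbolic_disk
    (lam : ℂ) (hlam : 0 < lam.im) (ε : ℝ) (hε0 : 0 < ε) (hε1 : ε < 1) :
    (∀ z : ℂ,
      Real.sqrt (1 + ε ^ 2) / (Real.sqrt (1 + ε ^ 2) + Real.sqrt 2 * ε) ≤ z.im / lam.im →
      z.im / lam.im ≤ Real.sqrt (1 + ε ^ 2) / (Real.sqrt (1 + ε ^ 2) - Real.sqrt 2 * ε) →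
      |(z - lam).re| / lam.im ≤ Real.sqrt 2 * ε / Real.sqrt (1 - ε ^ 2) →
      ‖(z - lam) / (z - (starRingEnd ℂ) lam)‖ ≤ ε) ∧
    (∀ x y : ℝ,
      (x - lam.re = (Real.sqrt 2 * ε / Real.sqrt (1 - ε ^ 2)) * lam.im ∨
        x - lam.re = -((Real.sqrt 2 * ε / Real.sqrt (1 - ε ^ 2)) * lam.im)) →
      (y = (Real.sqrt (1 + ε ^ 2) / (Real.sqrt (1 + ε ^ 2) + Real.sqrt 2 * ε)) * lam.im ∨
        y = (Real.sqrt (1 + ε ^ 2) / (Real.sqrt (1 + ε ^ 2) - Real.sqrt 2 * ε)) * lam.im) →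
      ‖((x : ℂ) + (y : ℂ) * Complex.I - lam) /
        ((x : ℂ) + (y : ℂ) * Complex.I - (starRingEnd ℂ) lam)‖ = ε) := by
  set a := lam.re with ha
  set b := lam.im with hb
  set s := Real.sqrt (1 + ε ^ 2) with hs
  set t := Real.sqrt 2 * ε with ht
  set u := Real.sqrt (1 - ε ^ 2) with hu
  have hε2 : (0:ℝ) < 1 - ε ^ 2 := by nlinarith
  have hs2 : s ^ 2 = 1 + ε ^ 2 := Real.sq_sqrt (by positivity)
  have ht2 : t ^ 2 = 2 * ε ^ 2 := by
    rw [ht, mul_pow, Real.sq_sqrt (by norm_num)]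
  have hu2 : u ^ 2 = 1 - ε ^ 2 := Real.sq_sqrt hε2.le
  have hs0 : 0 < s := Real.sqrt_pos.mpr (by positivity)
  have ht0 : 0 < t := by positivity
  have hu0 : 0 < u := Real.sqrt_pos.mpr hε2
  have hst : t < s := by
    have h2 : t ^ 2 < s ^ 2 := by rw [hs2, ht2]; nlinarith
    exact lt_of_pow_lt_pow_left₀ 2 hs0.le h2
  constructor
  · intro z h1 h2 h3
    have h1' : s * b ≤ z.im * (s + t) := by
      rw [div_le_div_iff₀ (by linarith) hlam] at h1; linarith
    have h2' : z.im * (s - t) ≤ s * b := by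
      rw [div_le_div_iff₀ hlam (by linarith)] at h2; linarith
    have h3' : |(z - lam).re| * u ≤ t * b := by
      rw [div_le_div_iff₀ hlam hu0] at h3; linarith
    have hy0 : 0 < z.im := by nlinarith
    have hvne : z - (starRingEnd ℂ) lam ≠ 0 := by
      intro h
      have him : (z - (starRingEnd ℂ) lam).im = 0 := by rw [h]; simp
      simp [Complex.sub_im, Complex.conj_im] at him
      linarith
    have hx2 : (z - lam).re ^ 2 * u ^ 2 ≤ t ^ 2 * b ^ 2 := by
      have := mul_le_mul h3' h3' (by positivity) (by positivity)
      calc (z - lam).re ^ 2 * u ^ 2 = (|(z - lam).re| * u) * (|(z - lam).re| * u) := by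
            rw [← _root_.sq_abs]; ring
        _ ≤ (t * b) * (t * b) := this
        _ = t ^ 2 * b ^ 2 := by ring
    rw [hu2, ht2] at hx2
    have hprod : 0 ≤ (z.im * (s + t) - s * b) * (s * b - z.im * (s - t)) :=
      mul_nonneg (by linarith) (by linarith)
    have hexp : (z.im * (s + t) - s * b) * (s * b - z.im * (s - t)) =
        -((1 - ε ^ 2) * z.im ^ 2 - 2 * (1 + ε ^ 2) * b * z.im + (1 + ε ^ 2) * b ^ 2) := by
      linear_combination z.im ^ 2 * ht2 + (- z.im ^ 2 + 2 * b * z.im - b ^ 2) * hs2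
    have hq : (1 - ε ^ 2) * z.im ^ 2 - 2 * (1 + ε ^ 2) * b * z.im + (1 + ε ^ 2) * b ^ 2 ≤ 0 := by
      linarith [hprod.trans_eq hexp]
    have key : Complex.normSq (z - lam) ≤ ε ^ 2 * Complex.normSq (z - (starRingEnd ℂ) lam) := by
      simp only [Complex.normSq_apply, Complex.sub_re, Complex.sub_im, Complex.conj_re,
        Complex.conj_im, ← ha, ← hb]
      have hre : (z - lam).re = z.re - a := by simp [ha]
      rw [hre] at hx2
      nlinarith [hx2, hq]
    rw [norm_div, div_le_iff₀ (norm_pos_iff.mpr hvne)]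
    calc ‖z - lam‖ = Real.sqrt (Complex.normSq (z - lam)) := Complex.norm_def _
      _ ≤ Real.sqrt (ε ^ 2 * Complex.normSq (z - (starRingEnd ℂ) lam)) := Real.sqrt_le_sqrt key
      _ = ε * ‖z - (starRingEnd ℂ) lam‖ := by
          rw [Real.sqrt_mul (by positivity), Real.sqrt_sq hε0.le, Complex.norm_def]
  · intro x y hx hy
    have hd2 : (x - a) ^ 2 * u ^ 2 = t ^ 2 * b ^ 2 := by
      rcases hx with hd | hd <;> rw [hd] <;> field_simp <;> ring
    have hx2eq : (1 - ε ^ 2) * (x - a) ^ 2 = 2 * ε ^ 2 * b ^ 2 := by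
      linear_combination hd2 - (x - a) ^ 2 * hu2 + b ^ 2 * ht2
    have hy0 : 0 < y := by
      rcases hy with h | h <;> rw [h]
      · exact mul_pos (div_pos hs0 (by linarith)) hlam
      · exact mul_pos (div_pos hs0 (by linarith)) hlam
    have hqeq : (1 - ε ^ 2) * y ^ 2 - 2 * (1 + ε ^ 2) * b * y + (1 + ε ^ 2) * b ^ 2 = 0 := by
      rcases hy with h | h
      · have hy' : y * (s + t) = s * b := by rw [h]; field_simp
        linear_combination (y * (s - t) - b * s) * hy' + y ^ 2 * ht2 +
          (- y ^ 2 + 2 * b * y - b ^ 2) * hs2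
      · have hy' : y * (s - t) = s * b := by
          have h0 : s - t ≠ 0 := by linarith
          rw [h]; field_simp
        linear_combination (y * (s + t) - b * s) * hy' + y ^ 2 * ht2 +
          (- y ^ 2 + 2 * b * y - b ^ 2) * hs2
    have hzre : ((x : ℂ) + (y : ℂ) * Complex.I - lam).re = x - a := by simp [ha]
    have hzim : ((x : ℂ) + (y : ℂ) * Complex.I - lam).im = y - b := by simp [hb]
    have hvre : ((x : ℂ) + (y : ℂ) * Complex.I - (starRingEnd ℂ) lam).re = x - a := by
      simp [ha]
    have hvim : ((x : ℂ) + (y : ℂ) * Complex.I - (starRingEnd ℂ) lam).im = y + b := by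
      simp [hb]
    have hvne : (x : ℂ) + (y : ℂ) * Complex.I - (starRingEnd ℂ) lam ≠ 0 := by
      intro h
      have h0 : ((x : ℂ) + (y : ℂ) * Complex.I - (starRingEnd ℂ) lam).im = 0 := by rw [h]; simp
      rw [hvim] at h0; linarith
    have key : Complex.normSq ((x : ℂ) + (y : ℂ) * Complex.I - lam) =
        ε ^ 2 * Complex.normSq ((x : ℂ) + (y : ℂ) * Complex.I - (starRingEnd ℂ) lam) := by
      rw [Complex.normSq_apply, Complex.normSq_apply, hzre, hzim, hvre, hvim]
      linear_combination hx2eq + hqeq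
    rw [norm_div, div_eq_iff (norm_ne_zero_iff.mpr hvne)]
    calc ‖(x : ℂ) + (y : ℂ) * Complex.I - lam‖
        = Real.sqrt (Complex.normSq ((x : ℂ) + (y : ℂ) * Complex.I - lam)) := Complex.norm_def _
      _ = Real.sqrt (ε ^ 2 *
          Complex.normSq ((x : ℂ) + (y : ℂ) * Complex.I - (starRingEnd ℂ) lam)) := by rw [key]
      _ = ε * ‖(x : ℂ) + (y : ℂ) * Complex.I - (starRingEnd ℂ) lam‖ := by
          rw [Real.sqrt_mul (by positivity), Real.sqrt_sq hε0.le, Complex.norm_def]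
end

section
/- Let α, γ > 0, let z_k = (2k+1+iα)/γ for k ∈ ℤ, let m ∈ ℤ, and let w = (1/γ)·(2m + i·α√(1+α²)/(√(1+α²)+1)). Then |(w−z_k)/(w−conj z_k)| ≥ 1/√(1+2α²) for every k ∈ ℤ, with equality for k = m and k = m−1; consequently the pseudohyperbolic distance from w to the zero set {z_k : k ∈ ℤ} equals exactly 1/√(1+2α²). -/
open Complex

/-- The zero `z_k = (2k+1+iα)/γ` of the Blaschke product `B_{α,γ}`. -/
noncomputable def zk (α γ : ℝ) (k : ℤ) : ℂ :=
  ((2 * (k : ℂ) + 1) + (α : ℂ) * Complex.I) / (γ : ℂ)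

lemma key_identity (α : ℝ) (hα : 0 < α) :
    let s := Real.sqrt (1 + α ^ 2); let β := α * s / (s + 1);
    α * (1 + (β - α) ^ 2) = 2 * β := by
  intro s β
  have hs2 : s ^ 2 = 1 + α ^ 2 := Real.sq_sqrt (by positivity)
  have hs0 : 0 < s := Real.sqrt_pos.2 (by positivity)
  have hs1 : s + 1 ≠ 0 := by positivity
  show α * (1 + (α * s / (s + 1) - α) ^ 2) = 2 * (α * s / (s + 1))
  field_simp
  linear_combination (-1 : ℝ) * hs2

lemma ratio_ineq (α β x : ℝ) (hα : 0 < α) (hβ : α * (1 + (β - α) ^ 2) = 2 * β)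
    (hx : 1 ≤ x ^ 2) :
    1 / Real.sqrt (1 + 2 * α ^ 2) ≤
      Real.sqrt (x ^ 2 + (β - α) ^ 2) / Real.sqrt (x ^ 2 + (β + α) ^ 2) := by
  have hA : (0:ℝ) < 1 + 2 * α ^ 2 := by positivity
  have hD : (0:ℝ) < x ^ 2 + (β + α) ^ 2 := by nlinarith
  rw [div_le_div_iff₀ (Real.sqrt_pos.2 hA) (Real.sqrt_pos.2 hD), one_mul,
    ← Real.sqrt_mul (by positivity)]
  apply Real.sqrt_le_sqrt
  nlinarith [hβ, hx, sq_nonneg (β - α)]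

lemma ratio_eq (α β : ℝ) (hα : 0 < α) (hβ : α * (1 + (β - α) ^ 2) = 2 * β) :
    Real.sqrt (1 + (β - α) ^ 2) / Real.sqrt (1 + (β + α) ^ 2) =
      1 / Real.sqrt (1 + 2 * α ^ 2) := by
  have h1 : (0:ℝ) < 1 + (β - α) ^ 2 := by positivity
  have h2 : (1:ℝ) + (β + α) ^ 2 = (1 + 2 * α ^ 2) * (1 + (β - α) ^ 2) := by nlinarith [hβ]
  rw [h2, Real.sqrt_mul (by positivity)]
  rw [div_eq_div_iff (by positivity) (by positivity)]
  rw [one_mul, mul_comm]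

/-- for `w = (1/γ)(2m + iα√(1+α²)/(√(1+α²)+1))` the pseudohyperbolic
distance from `w` to every zero `z_k` is at least `1/√(1+2α²)`, with equality for
`k = m` and `k = m-1`; hence the distance from `w` to the zero set is exactly
`1/√(1+2α²)`. -/
theorem distance_from_strip_boundary_point_to_zeros
    (α γ : ℝ) (hα : 0 < α) (hγ : 0 < γ) (m : ℤ) :
    (∀ k : ℤ,
      1 / Real.sqrt (1 + 2 * α ^ 2) ≤
        norm
          (((((2 * (m : ℂ)) + (↑(α * Real.sqrt (1 + α ^ 2) / (Real.sqrt (1 + α ^ 2) + 1)) : ℂ)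
              * Complex.I) / (γ : ℂ)) - zk α γ k) /
           (((((2 * (m : ℂ)) + (↑(α * Real.sqrt (1 + α ^ 2) / (Real.sqrt (1 + α ^ 2) + 1)) : ℂ)
              * Complex.I) / (γ : ℂ))) - (starRingEnd ℂ) (zk α γ k)))) ∧
    (∀ k : ℤ, k = m ∨ k = m - 1 →
      norm
          (((((2 * (m : ℂ)) + (↑(α * Real.sqrt (1 + α ^ 2) / (Real.sqrt (1 + α ^ 2) + 1)) : ℂ)
              * Complex.I) / (γ : ℂ)) - zk α γ k) /
           (((((2 * (m : ℂ)) + (↑(α * Real.sqrt (1 + α ^ 2) / (Real.sqrt (1 + α ^ 2) + 1)) : ℂ)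
              * Complex.I) / (γ : ℂ))) - (starRingEnd ℂ) (zk α γ k))) =
        1 / Real.sqrt (1 + 2 * α ^ 2)) ∧
    IsLeast {d : ℝ | ∃ k : ℤ, d =
      norm
          (((((2 * (m : ℂ)) + (↑(α * Real.sqrt (1 + α ^ 2) / (Real.sqrt (1 + α ^ 2) + 1)) : ℂ)
              * Complex.I) / (γ : ℂ)) - zk α γ k) /
           (((((2 * (m : ℂ)) + (↑(α * Real.sqrt (1 + α ^ 2) / (Real.sqrt (1 + α ^ 2) + 1)) : ℂ)
              * Complex.I) / (γ : ℂ))) - (starRingEnd ℂ) (zk α γ k)))}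
      (1 / Real.sqrt (1 + 2 * α ^ 2)) := by
  set s : ℝ := Real.sqrt (1 + α ^ 2) with hs
  set β : ℝ := α * s / (s + 1) with hβdef
  have hβ : α * (1 + (β - α) ^ 2) = 2 * β := key_identity α hα
  have hγc : (γ : ℂ) ≠ 0 := by exact_mod_cast (ne_of_gt hγ)
  -- the value of the pseudohyperbolic ratio
  have habs : ∀ k : ℤ,
      norm
          (((((2 * (m : ℂ)) + (β : ℂ) * Complex.I) / (γ : ℂ)) - zk α γ k) /
           ((((2 * (m : ℂ)) + (β : ℂ) * Complex.I) / (γ : ℂ)) - (starRingEnd ℂ) (zk α γ k))) =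
      Real.sqrt (((2 * (m - k) - 1 : ℤ) : ℝ) ^ 2 + (β - α) ^ 2) /
        Real.sqrt (((2 * (m - k) - 1 : ℤ) : ℝ) ^ 2 + (β + α) ^ 2) := by
    intro k
    have hnum : (((2 * (m : ℂ)) + (β : ℂ) * Complex.I) / (γ : ℂ)) - zk α γ k =
        ((((2 * (m - k) - 1 : ℤ) : ℝ) : ℂ) + ((β - α : ℝ) : ℂ) * Complex.I) / (γ : ℂ) := by
      rw [zk, div_sub_div_same]
      push_cast
      ring
    have hconj : (starRingEnd ℂ) (zk α γ k) =
        ((2 * (k : ℂ) + 1) - (α : ℂ) * Complex.I) / (γ : ℂ) := by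
      rw [zk, map_div₀]
      congr 1
      · simp only [map_add, map_mul, map_one, map_ofNat, map_intCast, Complex.conj_I,
          Complex.conj_ofReal]
        ring
      · exact Complex.conj_ofReal γ
    have hden : (((2 * (m : ℂ)) + (β : ℂ) * Complex.I) / (γ : ℂ)) - (starRingEnd ℂ) (zk α γ k) =
        ((((2 * (m - k) - 1 : ℤ) : ℝ) : ℂ) + ((β + α : ℝ) : ℂ) * Complex.I) / (γ : ℂ) := by
      rw [hconj, div_sub_div_same]
      push_cast
      ring
    rw [hnum, hden, norm_div, norm_div, norm_div, Complex.norm_add_mul_I,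
      Complex.norm_add_mul_I]
    have hg : norm (γ:ℂ) ≠ 0 := by
      simp [abs_of_pos hγ, hγ.ne']
    rw [div_div_div_comm, div_self hg, div_one]
  have hx2 : ∀ k : ℤ, (1:ℝ) ≤ (((2 * (m - k) - 1 : ℤ) : ℝ)) ^ 2 := by
    intro k
    have : (1:ℤ) ≤ (2 * (m - k) - 1) ^ 2 := by
      rcases le_or_gt (m - k) 0 with h | h
      · nlinarith
      · nlinarith
    exact_mod_cast this
  refine ⟨?_, ?_, ?_⟩
  · intro k
    rw [habs k]
    exact ratio_ineq α β _ hα hβ (hx2 k)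
  · intro k hk
    have hx1 : (((2 * (m - k) - 1 : ℤ) : ℝ)) ^ 2 = 1 := by
      rcases hk with rfl | rfl <;> norm_num
    rw [habs k, hx1]
    exact ratio_eq α β hα hβ
  · constructor
    · refine ⟨m, ?_⟩
      have hx1 : (((2 * (m - m) - 1 : ℤ) : ℝ)) ^ 2 = 1 := by norm_num
      rw [habs m, hx1, ratio_eq α β hα hβ]
    · rintro d ⟨k, rfl⟩
      rw [habs k]
      exact ratio_ineq α β _ hα hβ (hx2 k)
end

section
/- Let α, γ > 0 and let z_k = (2k+1+iα)/γ for k ∈ ℤ. Then for every z in the upper half-plane ℂ₊, the family (|(z−z_k)/(z−conj z_k)|)_{k∈ℤ} is multipliable and its product equals the modulus of B_{α,γ}: ∏_{k∈ℤ} |(z−z_k)/(z−conj z_k)| = |(e^{iπγz} + e^{−πα})/(1 + e^{iπγz−πα})|. -/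
open Complex Filter Finset Topology

/-- The function `B_{α,γ}(z) = (e^{iπγz} + e^{−πα})/(1 + e^{iπγz−πα})`. -/
noncomputable def Bag (α γ : ℝ) (z : ℂ) : ℂ :=
  (Complex.exp (Complex.I * Real.pi * γ * z) + Complex.exp (-(Real.pi * α : ℝ))) /
    (1 + Complex.exp (Complex.I * Real.pi * γ * z - (Real.pi * α : ℝ)))

/-! ### Auxiliary lemmas -/

noncomputable def Wp (n : ℕ) : ℝ := ∏ j ∈ Finset.range n, ((2*(j:ℝ)+1)/(2*j+2))^2

lemma Wp_pos (n : ℕ) : 0 < Wp n := by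
  apply Finset.prod_pos; intro j _; positivity

lemma wallis_identity (n : ℕ) :
    (∏ i ∈ Finset.range n, ((2 : ℝ) * i + 2) / (2 * i + 1) * ((2 * i + 2) / (2 * i + 3)))
      * ((2*n+1) * Wp n) = 1 := by
  induction n with
  | zero => simp [Wp]
  | succ n ih =>
    rw [Wp, Finset.prod_range_succ, Finset.prod_range_succ, ← Wp]
    have h1 : (2*(n:ℝ)+1) ≠ 0 := by positivity
    have h2 : (2*(n:ℝ)+2) ≠ 0 := by positivity
    have h3 : (2*(n:ℝ)+3) ≠ 0 := by positivity
    have hstep : ((2*(n:ℝ)+2)/(2*n+1)*((2*n+2)/(2*n+3))) * ((2*(n:ℝ)+3) * ((2*(n:ℝ)+1)/(2*n+2))^2) = 2*n+1 := by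
      field_simp
    push_cast
    calc (∏ i ∈ Finset.range n, ((2 : ℝ) * i + 2) / (2 * i + 1) * ((2 * i + 2) / (2 * i + 3)))
          * ((2*(n:ℝ)+2)/(2*n+1)*((2*n+2)/(2*n+3))) * ((2*((n:ℝ)+1)+1) * (Wp n * ((2*(n:ℝ)+1)/(2*n+2))^2))
        = ((∏ i ∈ Finset.range n, ((2 : ℝ) * i + 2) / (2 * i + 1) * ((2 * i + 2) / (2 * i + 3))) * Wp n)
            * (((2*(n:ℝ)+2)/(2*n+1)*((2*n+2)/(2*n+3))) * ((2*(n:ℝ)+3) * ((2*(n:ℝ)+1)/(2*n+2))^2)) := by ring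
      _ = ((∏ i ∈ Finset.range n, ((2 : ℝ) * i + 2) / (2 * i + 1) * ((2 * i + 2) / (2 * i + 3))) * Wp n) * (2*(n:ℝ)+1) := by rw [hstep]
      _ = 1 := by linear_combination ih

lemma tendsto_wallis_inv : Tendsto (fun n : ℕ => (2*(n:ℝ)+1) * Wp n) atTop (𝓝 (2/Real.pi)) := by
  have h := Real.tendsto_prod_pi_div_two.inv₀ (by positivity : (Real.pi/2) ≠ 0)
  have h2 : (2:ℝ)/Real.pi = (Real.pi/2)⁻¹ := by
    rw [inv_div]
  rw [h2]
  apply h.congr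
  intro n
  have hv := wallis_identity n
  exact inv_eq_of_mul_eq_one_right hv

lemma tendsto_Wp_zero : Tendsto Wp atTop (𝓝 0) := by
  have hinv : Tendsto (fun n : ℕ => 1/(2*(n:ℝ)+1)) atTop (𝓝 0) := by
    have h1 : Tendsto (fun n : ℕ => 2*(n:ℝ)+1) atTop atTop := by
      apply tendsto_atTop_add_const_right
      exact (tendsto_natCast_atTop_atTop (R := ℝ)).const_mul_atTop (by norm_num)
    have := tendsto_inv_atTop_zero.comp h1
    apply this.congr
    intro n
    simp [Function.comp, one_div]
  have := tendsto_wallis_inv.mul hinv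
  rw [mul_zero] at this
  apply this.congr
  intro n
  field_simp

lemma sin_prod_identity (x : ℂ) (n : ℕ) :
    (Real.pi : ℂ) * ((x+1)/2) * ∏ j ∈ Finset.range n, (1 - ((x+1)/2)^2/((j:ℂ)+1)^2)
    = (∏ k ∈ Finset.range n, (1 - x^2/(2*(k:ℂ)+1)^2)) * ((Real.pi : ℂ)/2) * ((2*(n:ℂ)+1) + x) * ((Wp n : ℝ) : ℂ) := by
  induction n with
  | zero => simp [Wp]; ring
  | succ n ih =>
    rw [Finset.prod_range_succ, Finset.prod_range_succ, Wp, Finset.prod_range_succ, ← Wp]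
    have h1 : ((n:ℂ)+1) ≠ 0 := by
      have : ((n+1:ℕ):ℂ) ≠ 0 := Nat.cast_ne_zero.2 n.succ_ne_zero
      push_cast at this; exact this
    have h2 : (2*(n:ℂ)+1) ≠ 0 := by
      have : ((2*n+1:ℕ):ℂ) ≠ 0 := Nat.cast_ne_zero.2 (Nat.succ_ne_zero _)
      push_cast at this; exact this
    have h3 : (2*(n:ℂ)+2) ≠ 0 := by
      have : ((2*n+2:ℕ):ℂ) ≠ 0 := Nat.cast_ne_zero.2 (Nat.succ_ne_zero _)
      push_cast at this; exact this
    have hfac : ((2*(n:ℂ)+1) + x) * (1 - ((x+1)/2)^2/((n:ℂ)+1)^2)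
        = (1 - x^2/(2*(n:ℂ)+1)^2) * ((2*((n:ℂ)+1)+1) + x) * (((2*(n:ℂ)+1)/(2*(n:ℂ)+2))^2) := by
      field_simp
      ring
    push_cast
    linear_combination (1 - ((x+1)/2)^2/((n:ℂ)+1)^2) * ih
      + ((∏ k ∈ Finset.range n, (1 - x^2/(2*(k:ℂ)+1)^2)) * ((Real.pi : ℂ)/2) * ((Wp n : ℝ) : ℂ)) * hfac

lemma tendsto_cos_prod (x : ℂ) :
    Tendsto (fun n : ℕ => ∏ k ∈ Finset.range n, (1 - x^2/(2*(k:ℂ)+1)^2)) atTop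
      (𝓝 (Complex.cos (Real.pi * x / 2))) := by
  by_cases hodd : ∃ m : ℕ, x = 2*(m:ℂ)+1 ∨ x = -(2*(m:ℂ)+1)
  · obtain ⟨m, hm⟩ := hodd
    have h2m1 : (2*(m:ℂ)+1) ≠ 0 := by
      have : ((2*m+1:ℕ):ℂ) ≠ 0 := Nat.cast_ne_zero.2 (Nat.succ_ne_zero _)
      push_cast at this; exact this
    have hzero : Complex.cos ((Real.pi : ℂ) * x / 2) = 0 := by
      rw [Complex.cos_eq_zero_iff]
      rcases hm with h | h
      · exact ⟨(m:ℤ), by rw [h]; push_cast; ring⟩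
      · exact ⟨-((m:ℤ)+1), by rw [h]; push_cast; ring⟩
    rw [hzero]
    have hx2 : x^2 = (2*(m:ℂ)+1)^2 := by rcases hm with h | h <;> rw [h] <;> try ring
    apply tendsto_const_nhds.congr'
    filter_upwards [eventually_ge_atTop (m+1)] with n hn
    symm
    apply Finset.prod_eq_zero (Finset.mem_range.2 (by omega : m < n))
    rw [hx2, div_self (pow_ne_zero _ h2m1), sub_self]
  · push_neg at hodd
    have hne : ∀ n : ℕ, (2*(n:ℂ)+1) + x ≠ 0 := by
      intro n h
      exact (hodd n).2 (by linear_combination h)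
    set D : ℕ → ℂ := fun n => ((Real.pi : ℂ)/2) * ((2*(n:ℂ)+1) + x) * ((Wp n : ℝ) : ℂ) with hDdef
    have hDne : ∀ n, D n ≠ 0 := by
      intro n
      exact mul_ne_zero (mul_ne_zero (div_ne_zero (Complex.ofReal_ne_zero.2 Real.pi_ne_zero) two_ne_zero) (hne n)) (Complex.ofReal_ne_zero.2 (Wp_pos n).ne')
    have hWc : Tendsto (fun n : ℕ => ((Wp n : ℝ) : ℂ)) atTop (𝓝 0) := by
      have := (Complex.continuous_ofReal.tendsto 0).comp tendsto_Wp_zero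
      simpa [Function.comp_def] using this
    have hAc : Tendsto (fun n : ℕ => (((2*(n:ℝ)+1) * Wp n : ℝ) : ℂ)) atTop (𝓝 ((2/(Real.pi:ℂ)))) := by
      have := (Complex.continuous_ofReal.tendsto (2/Real.pi)).comp tendsto_wallis_inv
      simpa only [Function.comp_def, Complex.ofReal_div, Complex.ofReal_ofNat] using this
    have hD : Tendsto D atTop (𝓝 1) := by
      have h1 : Tendsto (fun n : ℕ => ((Real.pi:ℂ)/2) * (((2*(n:ℝ)+1) * Wp n : ℝ) : ℂ)
          + ((Real.pi:ℂ)/2) * x * ((Wp n : ℝ):ℂ)) atTop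
          (𝓝 (((Real.pi:ℂ)/2) * (2/(Real.pi:ℂ)) + ((Real.pi:ℂ)/2) * x * 0)) :=
        (hAc.const_mul _).add (hWc.const_mul _)
      have h2 : ((Real.pi:ℂ)/2) * (2/(Real.pi:ℂ)) + ((Real.pi:ℂ)/2) * x * 0 = 1 := by
        have : (Real.pi:ℂ) ≠ 0 := by simp [Complex.ofReal_ne_zero, Real.pi_ne_zero]
        field_simp
        ring
      rw [h2] at h1
      apply h1.congr
      intro n
      rw [hDdef]
      push_cast
      ring
    have hS : Tendsto (fun n : ℕ => (Real.pi : ℂ) * ((x+1)/2) *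
        ∏ j ∈ Finset.range n, (1 - ((x+1)/2)^2/((j:ℂ)+1)^2)) atTop
        (𝓝 (Complex.sin ((Real.pi:ℂ) * ((x+1)/2)))) := Complex.tendsto_euler_sin_prod ((x+1)/2)
    have hsc : Complex.sin ((Real.pi:ℂ) * ((x+1)/2)) = Complex.cos ((Real.pi:ℂ) * x / 2) := by
      have : (Real.pi:ℂ) * ((x+1)/2) = (Real.pi:ℂ) * x / 2 + (Real.pi:ℂ)/2 := by ring
      rw [this, Complex.sin_add_pi_div_two]
    rw [hsc] at hS
    have := hS.div hD one_ne_zero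
    rw [div_one] at this
    apply this.congr
    intro n
    simp only [Pi.div_apply]
    rw [div_eq_iff (hDne n), hDdef]
    linear_combination sin_prod_identity x n

lemma prod_Icc_pair {M : Type*} [CommMonoid M] (h : ℤ → M) (n : ℕ) :
    ∏ k ∈ Finset.Icc (-(n:ℤ)) ((n:ℤ)-1), h k = ∏ j ∈ Finset.range n, (h j * h (-1-j)) := by
  induction n with
  | zero => simp
  | succ n ih =>
    have hset : Finset.Icc (-(n+1:ℤ)) ((n+1:ℤ)-1)
        = insert (-(n+1:ℤ)) (insert ((n:ℤ)) (Finset.Icc (-(n:ℤ)) ((n:ℤ)-1))) := by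
      ext x
      simp only [Finset.mem_Icc, Finset.mem_insert]
      omega
    push_cast
    rw [hset, Finset.prod_insert, Finset.prod_insert, ih, Finset.prod_range_succ]
    · rw [show (-((n:ℤ)+1)) = -1-(n:ℤ) by ring]
      ac_rfl
    · simp only [Finset.mem_Icc]; omega
    · simp only [Finset.mem_insert, Finset.mem_Icc]; omega

lemma tendsto_Icc_atTop : Tendsto (fun n : ℕ => Finset.Icc (-(n:ℤ)) ((n:ℤ)-1)) atTop atTop := by
  apply tendsto_atTop_finset_of_monotone
  · intro m n hmn
    apply Finset.Icc_subset_Icc <;> omega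
  · intro x
    exact ⟨x.natAbs + 1, by simp only [Finset.mem_Icc]; omega⟩

lemma cos_cross_identity (α γ : ℝ) (z : ℂ) :
    Complex.cos ((Real.pi:ℂ) * ((γ:ℂ)*z - (α:ℂ)*I) / 2) *
      (1 + Complex.exp (Complex.I * Real.pi * γ * z - (Real.pi * α : ℝ)))
    = Complex.cos ((Real.pi:ℂ) * ((γ:ℂ)*z + (α:ℂ)*I) / 2) *
      (Complex.exp (Complex.I * Real.pi * γ * z) + Complex.exp (-(Real.pi * α : ℝ))) := by
  set X := Complex.exp (Complex.I * Real.pi * γ * z / 2) with hX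
  set Y := Complex.exp ((Real.pi : ℂ) * α / 2) with hY
  have hXne : X ≠ 0 := Complex.exp_ne_zero _
  have hYne : Y ≠ 0 := Complex.exp_ne_zero _
  have e1 : Complex.exp (((Real.pi:ℂ) * ((γ:ℂ)*z - (α:ℂ)*I) / 2) * I) = X * Y := by
    rw [hX, hY, ← Complex.exp_add]
    congr 1
    linear_combination (-(Real.pi:ℂ) * α / 2) * Complex.I_mul_I
  have e2 : Complex.exp (-(((Real.pi:ℂ) * ((γ:ℂ)*z - (α:ℂ)*I) / 2) * I)) = (X * Y)⁻¹ := by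
    rw [Complex.exp_neg, e1]
  have e3 : Complex.exp (((Real.pi:ℂ) * ((γ:ℂ)*z + (α:ℂ)*I) / 2) * I) = X * Y⁻¹ := by
    rw [hX, hY, ← Complex.exp_neg, ← Complex.exp_add]
    congr 1
    linear_combination ((Real.pi:ℂ) * α / 2) * Complex.I_mul_I
  have e4 : Complex.exp (-(((Real.pi:ℂ) * ((γ:ℂ)*z + (α:ℂ)*I) / 2) * I)) = X⁻¹ * Y := by
    rw [Complex.exp_neg, e3, mul_inv, inv_inv]
  have e5 : Complex.exp (Complex.I * Real.pi * γ * z - (Real.pi * α : ℝ)) = X^2 * (Y^2)⁻¹ := by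
    rw [hX, hY, ← Complex.exp_nat_mul, ← Complex.exp_nat_mul, ← Complex.exp_neg, ← Complex.exp_add]
    congr 1
    push_cast
    ring
  have e6 : Complex.exp (Complex.I * Real.pi * γ * z) = X^2 := by
    rw [hX, ← Complex.exp_nat_mul]
    congr 1
    push_cast
    ring
  have e7 : Complex.exp (-(Real.pi * α : ℝ) : ℂ) = (Y^2)⁻¹ := by
    rw [hY, ← Complex.exp_nat_mul, ← Complex.exp_neg]
    congr 1
    push_cast
    ring
  rw [Complex.cos, Complex.cos]
  simp only [neg_mul]
  rw [e1, e2, e3, e4, e5, e6, e7]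
  field_simp
  ring

lemma log_bound {c N x : ℝ} (hc : 0 < c) (hN2 : 2*c ≤ N) (hxsq : x^2 = 1 - c/N) (hx : 0 < x) :
    ‖Real.log x‖ ≤ c/N := by
  have hN : 0 < N := by linarith
  set t := c/N with ht
  have ht0 : 0 < t := div_pos hc hN
  have ht2 : t ≤ 1/2 := by
    rw [ht, div_le_div_iff₀ hN (by norm_num)]
    linarith
  have hx1 : x ≤ 1 := by nlinarith
  have hlog_le : Real.log x ≤ 0 := Real.log_nonpos hx.le hx1
  rw [Real.norm_eq_abs, abs_of_nonpos hlog_le]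
  have hlx : Real.log x = Real.log (1-t) / 2 := by
    have := Real.log_pow x 2
    rw [hxsq] at this
    push_cast at this
    linarith
  rw [hlx]
  have h1t : 0 < 1 - t := by linarith
  have hkey : -Real.log (1-t) ≤ t/(1-t) := by
    have := Real.log_le_sub_one_of_pos (inv_pos.2 h1t)
    rw [Real.log_inv] at this
    have heq : (1-t)⁻¹ - 1 = t/(1-t) := by field_simp; ring
    linarith [heq ▸ this]
  have h2 : t/(1-t) ≤ 2*t := by
    rw [div_le_iff₀ h1t]
    nlinarith
  linarith

/-! ### Main theorem -/

/-- for every `z` in the upper half-plane, the family of pseudohyperbolic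
moduli `|(z−z_k)/(z−conj z_k)|`, `k ∈ ℤ`, is multipliable, and its product equals
`|B_{α,γ}(z)|`. -/
theorem blaschke_product_of_arithmetic_zeros
    (α γ : ℝ) (hα : 0 < α) (hγ : 0 < γ) (z : ℂ) (hz : 0 < z.im) :
    Multipliable (fun k : ℤ =>
      ‖(z - zk α γ k) / (z - (starRingEnd ℂ) (zk α γ k))‖) ∧
    (∏' k : ℤ, ‖(z - zk α γ k) / (z - (starRingEnd ℂ) (zk α γ k))‖) =
      ‖Bag α γ z‖ := by
  have hγc : (γ:ℂ) ≠ 0 := Complex.ofReal_ne_zero.2 hγ.ne'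
  set a : ℂ := (γ:ℂ)*z - (α:ℂ)*I with ha
  set b : ℂ := (γ:ℂ)*z + (α:ℂ)*I with hb
  set g : ℤ → ℂ := fun k => (a - (2*(k:ℂ)+1))/(b - (2*(k:ℂ)+1)) with hg
  have hbk : ∀ k : ℤ, b - (2*(k:ℂ)+1) ≠ 0 := by
    intro k h
    have him : (b - (2*(k:ℂ)+1)).im = γ*z.im + α := by
      simp [hb]
    rw [h] at him
    simp at him
    nlinarith [mul_pos hγ hz]
  have hconj : ∀ k : ℤ, (starRingEnd ℂ) (zk α γ k) = ((2*(k:ℂ)+1) - (α:ℂ)*I)/(γ:ℂ) := by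
    intro k
    rw [zk, map_div₀]
    congr 1
    · simp [map_add, map_mul, map_ofNat, map_intCast, Complex.conj_I, Complex.conj_ofReal]
      ring
    · exact Complex.conj_ofReal γ
  have hnum : ∀ k : ℤ, z - zk α γ k = (a - (2*(k:ℂ)+1))/(γ:ℂ) := by
    intro k
    rw [zk, ha]
    field_simp
    ring
  have hden : ∀ k : ℤ, z - (starRingEnd ℂ) (zk α γ k) = (b - (2*(k:ℂ)+1))/(γ:ℂ) := by
    intro k
    rw [hconj, hb]
    field_simp
    ring
  have hFg : ∀ k : ℤ, ‖(z - zk α γ k) / (z - (starRingEnd ℂ) (zk α γ k))‖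
      = ‖g k‖ := by
    intro k
    rw [hnum, hden]
    congr 1
    rw [div_div_div_comm, div_self hγc, div_one]
  simp only [hFg]
  -- value of Bag
  have hBagden : 1 + Complex.exp (Complex.I * Real.pi * γ * z - (Real.pi * α : ℝ)) ≠ 0 := by
    intro h
    have hE : Complex.exp (Complex.I * Real.pi * γ * z - (Real.pi * α : ℝ)) = -1 := by
      linear_combination h
    have habs := congrArg (‖·‖) hE
    rw [Complex.norm_exp] at habs
    simp at habs
    nlinarith [Real.pi_pos, mul_pos (mul_pos Real.pi_pos hγ) hz, mul_pos Real.pi_pos hα]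
  by_cases hcase : ∀ k : ℤ, z ≠ zk α γ k
  · -- main case: z is not a zero
    have haz : ∀ k : ℤ, a - (2*(k:ℂ)+1) ≠ 0 := by
      intro k h
      apply hcase k
      rw [zk, eq_div_iff hγc, ha] at *
      linear_combination h
    have hgne : ∀ k : ℤ, g k ≠ 0 := fun k => div_ne_zero (haz k) (hbk k)
    have habs_pos : ∀ k : ℤ, 0 < ‖g k‖ := fun k => norm_pos_iff.2 (hgne k)
    set c : ℝ := 4*α*γ*z.im with hc
    have hcpos : 0 < c := by
      have := mul_pos (mul_pos hα hγ) hz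
      rw [hc]; nlinarith
    have hNk : ∀ k : ℤ, 0 < Complex.normSq (b - (2*(k:ℂ)+1)) := fun k => Complex.normSq_pos.2 (hbk k)
    have hsq : ∀ k : ℤ, (‖g k‖)^2 = 1 - c / Complex.normSq (b - (2*(k:ℂ)+1)) := by
      intro k
      simp only [hg]
      rw [norm_div, div_pow, Complex.sq_norm, Complex.sq_norm]
      have hnum2 : Complex.normSq (a - (2*(k:ℂ)+1)) = Complex.normSq (b - (2*(k:ℂ)+1)) - c := by
        rw [ha, hb, hc]
        simp [Complex.normSq_apply]
        try ring
      rw [hnum2, sub_div, div_self (hNk k).ne']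
    have hNre : ∀ k : ℤ, (γ*z.re - (2*(k:ℝ)+1))^2 ≤ Complex.normSq (b - (2*(k:ℂ)+1)) := by
      intro k
      rw [hb, Complex.normSq_apply]
      have h1 : ((γ:ℂ)*z + (α:ℂ)*I - (2*(k:ℂ)+1)).re = γ*z.re - (2*(k:ℝ)+1) := by
        simp
        try ring
      rw [h1]
      nlinarith [sq_nonneg (((γ:ℂ)*z + (α:ℂ)*I - (2*(k:ℂ)+1)).im)]
    have key : ∀ k : ℤ, 2*c ≤ (k:ℝ)^2 → (k:ℝ)^2 ≤ (γ*z.re - (2*(k:ℝ)+1))^2 →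
        ‖Real.log (‖g k‖)‖ ≤ c * (1/(k:ℝ)^2) := by
      intro k h2c hk2
      have hk2N : (k:ℝ)^2 ≤ Complex.normSq (b - (2*(k:ℂ)+1)) := hk2.trans (hNre k)
      have h2cN : 2*c ≤ Complex.normSq (b - (2*(k:ℂ)+1)) := h2c.trans hk2N
      have hk2pos : 0 < (k:ℝ)^2 := by nlinarith
      calc ‖Real.log (‖g k‖)‖
          ≤ c / Complex.normSq (b - (2*(k:ℂ)+1)) := log_bound hcpos h2cN (hsq k) (habs_pos k)
        _ ≤ c / (k:ℝ)^2 := div_le_div_of_nonneg_left hcpos.le hk2pos hk2N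
        _ = c * (1/(k:ℝ)^2) := by ring
    have hlog_sum : Summable (fun k : ℤ => Real.log (‖g k‖)) := by
      have hsummable : Summable (fun k : ℤ => c * (1/(k:ℝ)^2)) :=
        (Real.summable_one_div_int_pow.2 one_lt_two).mul_left c
      apply Summable.of_norm_bounded_eventually hsummable
      rw [Int.cofinite_eq, Filter.eventually_sup]
      set M : ℤ := max 1 ⌈|γ*z.re| + 2*c + 1⌉ with hM
      have hM1 : (1:ℤ) ≤ M := le_max_left _ _
      have hM2 : |γ*z.re| + 2*c + 1 ≤ (M:ℝ) := by
        calc |γ*z.re| + 2*c + 1 ≤ (⌈|γ*z.re| + 2*c + 1⌉:ℝ) := Int.le_ceil _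
          _ ≤ (M:ℝ) := by exact_mod_cast le_max_right _ _
      constructor
      · filter_upwards [eventually_le_atBot (-M)] with k hk
        have hk1 : (k:ℝ) ≤ -(M:ℝ) := by exact_mod_cast hk
        apply key k
        · nlinarith [le_abs_self (γ*z.re), neg_abs_le (γ*z.re), abs_nonneg (γ*z.re)]
        · nlinarith [le_abs_self (γ*z.re), neg_abs_le (γ*z.re), abs_nonneg (γ*z.re)]
      · filter_upwards [eventually_ge_atTop M] with k hk
        have hk1 : (M:ℝ) ≤ (k:ℝ) := by exact_mod_cast hk
        apply key k
        · nlinarith [le_abs_self (γ*z.re), neg_abs_le (γ*z.re), abs_nonneg (γ*z.re)]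
        · nlinarith [le_abs_self (γ*z.re), neg_abs_le (γ*z.re), abs_nonneg (γ*z.re)]
    have hp : HasProd (fun k : ℤ => ‖g k‖)
        (Real.exp (∑' k : ℤ, Real.log (‖g k‖))) := by
      refine HasProd.congr_fun hlog_sum.hasSum.rexp (fun k => ?_)
      simp only [Function.comp_apply]
      exact (Real.exp_log (habs_pos k)).symm
    have hπ : (Real.pi:ℂ) ≠ 0 := Complex.ofReal_ne_zero.2 Real.pi_ne_zero
    have hCb : Complex.cos ((Real.pi:ℂ) * b / 2) ≠ 0 := by
      intro h0
      rw [Complex.cos_eq_zero_iff] at h0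
      obtain ⟨m, hm⟩ := h0
      have hbm : b = 2*(m:ℂ)+1 := mul_left_cancel₀ hπ (by linear_combination 2 * hm)
      have := congrArg Complex.im hbm
      rw [hb] at this
      simp at this
      nlinarith [mul_pos hγ hz]
    have hCa : Complex.cos ((Real.pi:ℂ) * a / 2) ≠ 0 := by
      intro h0
      rw [Complex.cos_eq_zero_iff] at h0
      obtain ⟨m, hm⟩ := h0
      have ham : a = 2*(m:ℂ)+1 := mul_left_cancel₀ hπ (by linear_combination 2 * hm)
      exact haz m (by rw [ham]; ring)
    have hLpos : 0 < ‖Complex.cos ((Real.pi:ℂ)*a/2) / Complex.cos ((Real.pi:ℂ)*b/2)‖ :=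
      norm_pos_iff.2 (div_ne_zero hCa hCb)
    have t1 : Tendsto (fun n : ℕ => ∑ k ∈ Finset.Icc (-(n:ℤ)) ((n:ℤ)-1),
        Real.log (‖g k‖)) atTop (𝓝 (∑' k : ℤ, Real.log (‖g k‖))) :=
      hlog_sum.hasSum.comp tendsto_Icc_atTop
    have hPtend : Tendsto (fun n : ℕ => (∏ j ∈ Finset.range n, (1 - a^2/(2*(j:ℂ)+1)^2))
        / (∏ j ∈ Finset.range n, (1 - b^2/(2*(j:ℂ)+1)^2))) atTop
        (𝓝 (Complex.cos ((Real.pi:ℂ)*a/2) / Complex.cos ((Real.pi:ℂ)*b/2))) :=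
      (tendsto_cos_prod a).div (tendsto_cos_prod b) hCb
    have t2 : Tendsto (fun n : ℕ => ∑ k ∈ Finset.Icc (-(n:ℤ)) ((n:ℤ)-1),
        Real.log (‖g k‖)) atTop
        (𝓝 (Real.log (‖Complex.cos ((Real.pi:ℂ)*a/2) / Complex.cos ((Real.pi:ℂ)*b/2)‖))) := by
      have h1 : Tendsto (fun n : ℕ => Real.log (‖(∏ j ∈ Finset.range n, (1 - a^2/(2*(j:ℂ)+1)^2))
          / (∏ j ∈ Finset.range n, (1 - b^2/(2*(j:ℂ)+1)^2))‖)) atTop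
          (𝓝 (Real.log (‖Complex.cos ((Real.pi:ℂ)*a/2) / Complex.cos ((Real.pi:ℂ)*b/2)‖))) := by
        exact ((Real.continuousAt_log hLpos.ne').tendsto).comp
          ((continuous_norm.tendsto _).comp hPtend)
      apply h1.congr
      intro n
      have hpair : ∀ j : ℕ, g (j:ℤ) * g (-1-(j:ℤ))
          = (1 - a^2/(2*(j:ℂ)+1)^2) / (1 - b^2/(2*(j:ℂ)+1)^2) := by
        intro j
        have h2j : (2*(j:ℂ)+1) ≠ 0 := by
          have : ((2*j+1:ℕ):ℂ) ≠ 0 := Nat.cast_ne_zero.2 (Nat.succ_ne_zero _)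
          push_cast at this; exact this
        have hbm : b - (2*(j:ℂ)+1) ≠ 0 := by
          have := hbk (j:ℤ); push_cast at this; exact this
        have hbp : b + (2*(j:ℂ)+1) ≠ 0 := by
          have h' := hbk (-1-(j:ℤ))
          intro h0
          apply h'
          push_cast
          linear_combination h0
        have ham : a - (2*(j:ℂ)+1) ≠ 0 := by
          have := haz (j:ℤ); push_cast at this; exact this
        have hgj2 : g (-1-(j:ℤ)) = (a + (2*(j:ℂ)+1))/(b + (2*(j:ℂ)+1)) := by
          rw [hg]
          simp only
          push_cast
          congr 1 <;> ring
        have hgj1 : g (j:ℤ) = (a - (2*(j:ℂ)+1))/(b - (2*(j:ℂ)+1)) := by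
          simp only [hg]
          push_cast
          ring_nf
        have hd2 : 1 - b^2/(2*(j:ℂ)+1)^2 ≠ 0 := by
          have hfactor : 1 - b^2/(2*(j:ℂ)+1)^2
              = ((2*(j:ℂ)+1) - b)*((2*(j:ℂ)+1) + b) / (2*(j:ℂ)+1)^2 := by
            field_simp
            ring
          rw [hfactor]
          apply div_ne_zero (mul_ne_zero ?_ ?_) (pow_ne_zero _ h2j)
          · intro h0; exact hbm (by linear_combination -h0)
          · intro h0; exact hbp (by linear_combination h0)
        rw [hgj1, hgj2, div_mul_div_comm, div_eq_div_iff (mul_ne_zero hbm hbp) hd2]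
        field_simp
        ring
      calc Real.log (‖(∏ j ∈ Finset.range n, (1 - a^2/(2*(j:ℂ)+1)^2))
              / (∏ j ∈ Finset.range n, (1 - b^2/(2*(j:ℂ)+1)^2))‖)
          = Real.log (‖∏ j ∈ Finset.range n, ((1 - a^2/(2*(j:ℂ)+1)^2) / (1 - b^2/(2*(j:ℂ)+1)^2))‖) := by
            rw [Finset.prod_div_distrib]
        _ = Real.log (‖∏ j ∈ Finset.range n, (g (j:ℤ) * g (-1-(j:ℤ)))‖) := by
            rw [Finset.prod_congr rfl (fun j _ => (hpair j).symm)]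
        _ = Real.log (‖∏ k ∈ Finset.Icc (-(n:ℤ)) ((n:ℤ)-1), g k‖) := by
            rw [prod_Icc_pair g n]
        _ = Real.log (∏ k ∈ Finset.Icc (-(n:ℤ)) ((n:ℤ)-1), ‖g k‖) := by
            rw [norm_prod]
        _ = ∑ k ∈ Finset.Icc (-(n:ℤ)) ((n:ℤ)-1), Real.log (‖g k‖) :=
            Real.log_prod (fun k _ => (habs_pos k).ne')
    have hSL := tendsto_nhds_unique t1 t2
    refine ⟨hp.multipliable, ?_⟩
    rw [hp.tprod_eq, hSL, Real.exp_log hLpos]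
    have hBagC : Bag α γ z = Complex.cos ((Real.pi:ℂ)*a/2) / Complex.cos ((Real.pi:ℂ)*b/2) := by
      rw [Bag, div_eq_div_iff hBagden hCb, ha, hb]
      linear_combination (-1 : ℂ) * cos_cross_identity α γ z
    rw [hBagC]
  · -- degenerate case : z is one of the zeros
    push_neg at hcase
    obtain ⟨k0, hk0⟩ := hcase
    have hnum00 : a - (2*(k0:ℂ)+1) = 0 := by
      rw [ha, hk0, zk]
      field_simp
      ring
    have hg0 : ‖g k0‖ = 0 := by
      rw [hg]
      simp [hnum00]
    have hp : HasProd (fun k : ℤ => ‖g k‖) 0 := by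
      rw [HasProd]
      apply tendsto_const_nhds.congr'
      filter_upwards [eventually_ge_atTop ({k0} : Finset ℤ)] with s hs
      exact (Finset.prod_eq_zero (hs (Finset.mem_singleton_self k0)) hg0).symm
    refine ⟨hp.multipliable, ?_⟩
    rw [hp.tprod_eq]
    have hBag0 : Bag α γ z = 0 := by
      rw [Bag]
      have hnum0 : Complex.exp (Complex.I * Real.pi * γ * z) + Complex.exp (-(Real.pi * α : ℝ):ℂ) = 0 := by
        have harg : Complex.I * Real.pi * γ * z
            = (k0:ℂ) * (2*(Real.pi:ℂ)*Complex.I) + ((Real.pi:ℂ)*Complex.I + -((Real.pi*α:ℝ):ℂ)) := by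
          rw [hk0, zk]
          field_simp
          push_cast
          linear_combination ((Real.pi:ℂ)*(α:ℝ)) * Complex.I_mul_I
        rw [harg, Complex.exp_add, Complex.exp_int_mul_two_pi_mul_I, Complex.exp_add, Complex.exp_pi_mul_I]
        push_cast
        ring
      rw [hnum0, zero_div]
    rw [hBag0, norm_zero]
end

section
/- Let α > 0. Then for every γ > 0 the value B_{α,γ}(i) = (e^{−πγ} + e^{−πα})/(1 + e^{−π(γ+α)}) is a real number in (0,1) and satisfies 1 − B_{α,γ}(i) = (1−e^{−πγ})(1−e^{−πα})/(1+e^{−π(γ+α)}) ≤ (1−e^{−πα})·πγ. Consequently, for every α > 0, 0 < β < 1 and ρ > 0, the infinite product B(z) = ∏_{n=0}^∞ B_{α,β^nρ}(z) converges for every z in the upper half-plane ℂ₊ (the family of factors is multipliable at every z ∈ ℂ₊). -/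
open Complex

lemma Bag_den_split (α γ : ℝ) (z : ℂ) :
    Complex.exp (Complex.I * Real.pi * γ * z - (Real.pi * α : ℝ)) =
      Complex.exp (Complex.I * Real.pi * γ * z) * Complex.exp (-(Real.pi * α : ℝ)) := by
  rw [← Complex.exp_add]
  push_cast
  ring_nf

lemma norm_exp_ipgz (γ : ℝ) (z : ℂ) :
    ‖Complex.exp (Complex.I * Real.pi * γ * z)‖ = Real.exp (-(Real.pi * γ * z.im)) := by
  rw [Complex.norm_exp]
  congr 1
  simp [Complex.mul_re, Complex.mul_im, Complex.I_re, Complex.I_im]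

lemma norm_Bag_sub_one_le (α : ℝ) (hα : 0 < α) (γ : ℝ) (hγ : 0 < γ) (z : ℂ) (hz : 0 < z.im) :
    ‖Bag α γ z - 1‖ ≤ ‖Complex.exp (Complex.I * Real.pi * γ * z) - 1‖ := by
  set w := Complex.exp (Complex.I * Real.pi * γ * z) with hw
  set b : ℝ := Real.exp (-(Real.pi * α)) with hb
  have hb0 : 0 < b := Real.exp_pos _
  have hb1 : b < 1 := by
    rw [hb]
    apply Real.exp_lt_one_iff.mpr
    have := Real.pi_pos
    nlinarith
  have hwn : ‖w‖ ≤ 1 := by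
    rw [hw, norm_exp_ipgz]
    apply Real.exp_le_one_iff.mpr
    have h := Real.pi_pos
    nlinarith [mul_pos (mul_pos h hγ) hz]
  have hexpb : Complex.exp (-(Real.pi * α : ℝ)) = (b : ℂ) := by
    rw [hb, Complex.ofReal_exp, Complex.ofReal_neg]
  have hwb : ‖w * (b : ℂ)‖ < 1 := by
    rw [norm_mul]
    simp only [Complex.norm_real, Real.norm_eq_abs, abs_of_pos hb0]
    nlinarith
  have hden : (1 : ℂ) + w * (b : ℂ) ≠ 0 := by
    intro h
    have : ‖w * (b : ℂ)‖ = 1 := by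
      have : w * (b : ℂ) = -1 := by linear_combination h
      rw [this]; simp
    linarith
  have hdenn : 1 - b ≤ ‖(1 : ℂ) + w * (b : ℂ)‖ := by
    have h1 : ‖(1 : ℂ)‖ ≤ ‖(1 : ℂ) + w * (b : ℂ)‖ + ‖w * (b : ℂ)‖ := by
      calc ‖(1 : ℂ)‖ = ‖(1 + w * (b : ℂ)) - w * (b : ℂ)‖ := by ring_nf
        _ ≤ _ := norm_sub_le _ _
    have h2 : ‖w * (b : ℂ)‖ ≤ b := by
      rw [norm_mul]
      simp only [Complex.norm_real, Real.norm_eq_abs, abs_of_pos hb0]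
      nlinarith
    simp only [norm_one] at h1
    linarith
  have key : Bag α γ z - 1 = (w - 1) * (1 - (b : ℂ)) / (1 + w * (b : ℂ)) := by
    rw [Bag, Bag_den_split, ← hw, hexpb, div_sub_one hden]
    congr 1
    ring
  rw [key, norm_div, norm_mul]
  have h1b : ‖(1 : ℂ) - (b : ℂ)‖ = 1 - b := by
    rw [show (1 : ℂ) - (b : ℂ) = ((1 - b : ℝ) : ℂ) by push_cast; ring, Complex.norm_real,
      Real.norm_eq_abs, abs_of_pos (by linarith : (0:ℝ) < 1 - b)]
  rw [h1b]
  rw [div_le_iff₀ (lt_of_lt_of_le (by linarith) hdenn)]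
  calc ‖w - 1‖ * (1 - b) ≤ ‖w - 1‖ * ‖(1 : ℂ) + w * (b : ℂ)‖ := by
        apply mul_le_mul_of_nonneg_left hdenn (norm_nonneg _)

/-- `B_{α,γ}(i)` is a real number of `(0,1)` with
`1 − B_{α,γ}(i) = (1−e^{−πγ})(1−e^{−πα})/(1+e^{−π(γ+α)}) ≤ (1−e^{−πα})πγ`;
consequently the product `∏_{n≥0} B_{α,β^nρ}` converges (the family is multipliable)
at every point of the upper half-plane. -/
theorem Bag_at_i_estimate_and_multipliable (α : ℝ) (hα : 0 < α) :
    (∀ γ : ℝ, 0 < γ →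
      Bag α γ Complex.I =
        ((Real.exp (-(Real.pi * γ)) + Real.exp (-(Real.pi * α))) /
          (1 + Real.exp (-(Real.pi * (γ + α)))) : ℝ) ∧
      (0 : ℝ) < (Real.exp (-(Real.pi * γ)) + Real.exp (-(Real.pi * α))) /
          (1 + Real.exp (-(Real.pi * (γ + α)))) ∧
      (Real.exp (-(Real.pi * γ)) + Real.exp (-(Real.pi * α))) /
          (1 + Real.exp (-(Real.pi * (γ + α)))) < 1 ∧
      1 - (Real.exp (-(Real.pi * γ)) + Real.exp (-(Real.pi * α))) /
          (1 + Real.exp (-(Real.pi * (γ + α)))) =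
        (1 - Real.exp (-(Real.pi * γ))) * (1 - Real.exp (-(Real.pi * α))) /
          (1 + Real.exp (-(Real.pi * (γ + α)))) ∧
      1 - (Real.exp (-(Real.pi * γ)) + Real.exp (-(Real.pi * α))) /
          (1 + Real.exp (-(Real.pi * (γ + α)))) ≤
        (1 - Real.exp (-(Real.pi * α))) * (Real.pi * γ)) ∧
    (∀ β ρ : ℝ, 0 < β → β < 1 → 0 < ρ → ∀ z : ℂ, 0 < z.im →
      Multipliable (fun n : ℕ => Bag α (β ^ n * ρ) z)) := by
  have hπ := Real.pi_pos
  constructor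
  · intro γ hγ
    set a : ℝ := Real.exp (-(Real.pi * γ)) with ha
    set b : ℝ := Real.exp (-(Real.pi * α)) with hb
    have ha0 : 0 < a := Real.exp_pos _
    have hb0 : 0 < b := Real.exp_pos _
    have ha1 : a < 1 := Real.exp_lt_one_iff.mpr (by nlinarith)
    have hb1 : b < 1 := Real.exp_lt_one_iff.mpr (by nlinarith)
    have hab : Real.exp (-(Real.pi * (γ + α))) = a * b := by
      rw [ha, hb, ← Real.exp_add]; ring_nf
    have hden0 : (0:ℝ) < 1 + Real.exp (-(Real.pi * (γ + α))) := by
      rw [hab]; nlinarith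
    refine ⟨?_, by positivity, ?_, ?_, ?_⟩
    · rw [Bag]
      have h1 : Complex.I * Real.pi * γ * Complex.I = ((-(Real.pi * γ) : ℝ) : ℂ) := by
        push_cast
        linear_combination (Real.pi * γ : ℂ) * Complex.I_sq
      rw [h1]
      have h2 : ((-(Real.pi * γ) : ℝ) : ℂ) - ((Real.pi * α : ℝ) : ℂ) =
          ((-(Real.pi * (γ + α)) : ℝ) : ℂ) := by push_cast; ring
      rw [h2, show -((Real.pi * α : ℝ) : ℂ) = ((-(Real.pi * α) : ℝ) : ℂ) from
        (Complex.ofReal_neg _).symm, ← Complex.ofReal_exp, ← Complex.ofReal_exp,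
        ← Complex.ofReal_exp]
      norm_cast
    · rw [div_lt_one hden0, hab]
      nlinarith
    · rw [hab]
      field_simp
      ring
    · rw [hab]
      have hlin : 1 - a ≤ Real.pi * γ := by
        have := Real.add_one_le_exp (-(Real.pi * γ))
        rw [← ha] at this
        linarith
      have hid : 1 - (a + b) / (1 + a * b) = (1 - a) * (1 - b) / (1 + a * b) := by
        field_simp; ring
      rw [hid]
      have h1 : (1 - a) * (1 - b) / (1 + a * b) ≤ (1 - a) * (1 - b) := by
        rw [div_le_iff₀ (by nlinarith)]
        nlinarith [mul_nonneg (mul_nonneg (by linarith : (0:ℝ) ≤ 1 - a)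
          (by linarith : (0:ℝ) ≤ 1 - b)) (by positivity : (0:ℝ) ≤ a * b)]
      nlinarith [mul_le_mul_of_nonneg_right hlin (by linarith : (0:ℝ) ≤ 1 - b)]
  · intro β ρ hβ hβ1 hρ z hz
    -- choose N with π * β^N * ρ * ‖z‖ ≤ 1/4
    have hz0 : (0:ℝ) < ‖z‖ := by
      have hzz : z ≠ 0 := by intro h; rw [h] at hz; simp at hz
      exact norm_pos_iff.mpr hzz
    obtain ⟨N, hN⟩ : ∃ N : ℕ, Real.pi * (β ^ N * ρ) * ‖z‖ ≤ 1/4 := by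
      have htend : Filter.Tendsto (fun n : ℕ => β ^ n) Filter.atTop (nhds 0) :=
        tendsto_pow_atTop_nhds_zero_of_lt_one hβ.le hβ1
      have : ∀ᶠ n : ℕ in Filter.atTop, β ^ n < (1/4) / (Real.pi * ρ * ‖z‖) := by
        apply htend.eventually_lt_const
        positivity
      obtain ⟨N, hN⟩ := this.exists
      refine ⟨N, ?_⟩
      rw [lt_div_iff₀ (by positivity)] at hN
      nlinarith [pow_pos hβ N]
    apply Multipliable.comp_nat_add (k := N)
    -- norm bounds for the shifted sequence
    have hbd : ∀ n : ℕ, ‖Bag α (β ^ (n + N) * ρ) z - 1‖ ≤ (1/2) * β ^ n := by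
      intro n
      set gn : ℝ := β ^ (n + N) * ρ with hgn
      have hγpos : 0 < gn := by rw [hgn]; positivity
      have hnx : ‖(Complex.I * (Real.pi : ℂ) * (gn : ℂ) * z : ℂ)‖ = Real.pi * gn * ‖z‖ := by
        rw [norm_mul, norm_mul, norm_mul, Complex.norm_I, one_mul, Complex.norm_real,
          Complex.norm_real, Real.norm_eq_abs, Real.norm_eq_abs, abs_of_pos Real.pi_pos,
          abs_of_pos hγpos]
      have hsmall : Real.pi * gn * ‖z‖ ≤ (1/4) * β ^ n := by
        rw [hgn, pow_add]
        calc Real.pi * (β ^ n * β ^ N * ρ) * ‖z‖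
            = β ^ n * (Real.pi * (β ^ N * ρ) * ‖z‖) := by ring
          _ ≤ β ^ n * (1/4) := mul_le_mul_of_nonneg_left hN (by positivity)
          _ = (1/4) * β ^ n := by ring
      have hu : ‖(Complex.I * (Real.pi : ℂ) * (gn : ℂ) * z : ℂ)‖ ≤ (1/4) * β ^ n := by
        rw [hnx]; exact hsmall
      have hu1 : ‖(Complex.I * (Real.pi : ℂ) * (gn : ℂ) * z : ℂ)‖ ≤ 1 := by
        have hβn : β ^ n ≤ 1 := pow_le_one₀ hβ.le hβ1.le
        nlinarith
      have hexp : ‖Complex.exp (Complex.I * (Real.pi : ℂ) * (gn : ℂ) * z) - 1‖ ≤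
          2 * ‖(Complex.I * (Real.pi : ℂ) * (gn : ℂ) * z : ℂ)‖ := by
        exact Complex.norm_exp_sub_one_le (x := Complex.I * (Real.pi : ℂ) * (gn : ℂ) * z) hu1
      have h1 := norm_Bag_sub_one_le α hα gn hγpos z hz
      calc ‖Bag α gn z - 1‖
          ≤ ‖Complex.exp (Complex.I * (Real.pi : ℂ) * (gn : ℂ) * z) - 1‖ := h1
        _ ≤ 2 * ‖(Complex.I * (Real.pi : ℂ) * (gn : ℂ) * z : ℂ)‖ := hexp
        _ ≤ 2 * ((1/4) * β ^ n) := by linarith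
        _ = (1/2) * β ^ n := by ring
    have hhalf : ∀ n : ℕ, ‖Bag α (β ^ (n + N) * ρ) z - 1‖ ≤ 1/2 := by
      intro n
      have hβn : β ^ n ≤ 1 := pow_le_one₀ hβ.le hβ1.le
      have := hbd n
      nlinarith
    have hne : ∀ n : ℕ, Bag α (β ^ (n + N) * ρ) z ≠ 0 := by
      intro n h
      have := hhalf n
      rw [h] at this
      simp at this
      linarith
    have hlog : Summable (fun n : ℕ => Complex.log (Bag α (β ^ (n + N) * ρ) z)) := by
      apply Summable.of_norm_bounded (g := fun n => (3/4) * β ^ n)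
      · exact (summable_geometric_of_lt_one hβ.le hβ1).mul_left _
      · intro n
        have h1 : ‖Bag α (β ^ (n + N) * ρ) z - 1‖ ≤ 1/2 := hhalf n
        have h2 : Complex.log (Bag α (β ^ (n + N) * ρ) z) =
            Complex.log (1 + (Bag α (β ^ (n + N) * ρ) z - 1)) := by ring_nf
        rw [h2]
        have h3 := Complex.norm_log_one_add_half_le_self h1
        have := hbd n
        linarith
    exact Complex.multipliable_of_summable_log hlog
end

section
/- Let α > 0, set β = (√(1+α²)−1)/(√(1+α²)+1), let ρ > 0, and let σ(B) = {(2k+1+iα)/(β^nρ) : k ∈ ℤ, n ≥ 0}. Then for every ε with 1/√(1+2α²) < ε < 1, every point z of the half-plane Π_{α,ρ} = { z : Im z ≥ α√(1+α²)/(ρ(√(1+α²)+1)) } satisfies |(z−λ)/(z−conj λ)| < ε for some λ ∈ σ(B); i.e., Π_{α,ρ} ⊆ ∪_{λ∈σ(B)} {z : |b_λ(z)| < ε}. -/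
open Complex

set_option maxHeartbeats 1000000

private lemma key_ineq (α s ε B w : ℝ) (hα : 0 < α) (hw : 0 < w)
    (hs2 : s ^ 2 = 1 + α ^ 2) (hB : B ^ 2 ≤ 1)
    (h2 : α * w ^ 2 + α * s ^ 2 ≤ 2 * s ^ 2 * w)
    (h3 : 1 < ε ^ 2 * (1 + 2 * α ^ 2)) :
    B ^ 2 + (w - α) ^ 2 < ε ^ 2 * (B ^ 2 + (w + α) ^ 2) := by
  have hpos : 0 < B ^ 2 + (w + α) ^ 2 := by positivity
  have h4 : (2 * α ^ 2) * (B ^ 2 + (w + α) ^ 2) ≤ (1 + 2 * α ^ 2) * (4 * α * w) := by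
    nlinarith [mul_nonneg hα.le (by nlinarith : (0:ℝ) ≤ 2 * (1 + α ^ 2) * w - α * w ^ 2 - α * (1 + α ^ 2)),
      mul_nonneg (sq_nonneg α) (by linarith : (0:ℝ) ≤ 1 - B ^ 2)]
  have h3' : (1 - ε ^ 2) * (1 + 2 * α ^ 2) < 2 * α ^ 2 := by nlinarith
  have h5 : (1 - ε ^ 2) * (1 + 2 * α ^ 2) * (B ^ 2 + (w + α) ^ 2) < (2 * α ^ 2) * (B ^ 2 + (w + α) ^ 2) :=
    mul_lt_mul_of_pos_right h3' hpos
  have h6 : (1 - ε ^ 2) * (1 + 2 * α ^ 2) * (B ^ 2 + (w + α) ^ 2) < (1 + 2 * α ^ 2) * (4 * α * w) :=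
    lt_of_lt_of_le h5 h4
  have h7 : (1 - ε ^ 2) * (B ^ 2 + (w + α) ^ 2) < 4 * α * w := by
    have hc : (0:ℝ) < 1 + 2 * α ^ 2 := by positivity
    nlinarith
  nlinarith [h7]

private lemma real_key (α s ε d c x y : ℝ) (hα : 0 < α) (hd : 0 < d) (hy : 0 < y)
    (hs2 : s ^ 2 = 1 + α ^ 2) (hB : (x * d - c) ^ 2 ≤ 1)
    (h2 : α * (y * d) ^ 2 + α * s ^ 2 ≤ 2 * s ^ 2 * (y * d))
    (h3 : 1 < ε ^ 2 * (1 + 2 * α ^ 2)) :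
    (x - c / d) ^ 2 + (y - α / d) ^ 2 < ε ^ 2 * ((x - c / d) ^ 2 + (y + α / d) ^ 2) := by
  have key := key_ineq α s ε (x * d - c) (y * d) hα (mul_pos hy hd) hs2 hB h2 h3
  have hd2 : (0:ℝ) < d ^ 2 := by positivity
  have e1 : (x - c / d) ^ 2 = (x * d - c) ^ 2 / d ^ 2 := by field_simp
  have e2 : (y - α / d) ^ 2 = (y * d - α) ^ 2 / d ^ 2 := by field_simp
  have e3 : (y + α / d) ^ 2 = (y * d + α) ^ 2 / d ^ 2 := by field_simp
  rw [e1, e2, e3, ← add_div, ← add_div, ← mul_div_assoc]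
  exact div_lt_div_of_pos_right key hd2

/-- with `β = (√(1+α²)−1)/(√(1+α²)+1)`, the half-plane
`Π_{α,ρ} = {z : Im z ≥ α√(1+α²)/(ρ(√(1+α²)+1))}` is covered by the pseudohyperbolic
disks `{z : |b_λ(z)| < ε}`, `λ ∈ σ(B) = {(2k+1+iα)/(β^nρ)}`, for every
`ε > 1/√(1+2α²)`. -/
theorem halfplane_covered_by_pseudohyperbolic_disks
    (α ρ : ℝ) (hα : 0 < α) (hρ : 0 < ρ) (ε : ℝ)
    (hε : 1 / Real.sqrt (1 + 2 * α ^ 2) < ε) (hε1 : ε < 1) (z : ℂ)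
    (hz : α * Real.sqrt (1 + α ^ 2) / (ρ * (Real.sqrt (1 + α ^ 2) + 1)) ≤ z.im) :
    ∃ k : ℤ, ∃ n : ℕ,
      ‖(z - ((2 * (k : ℂ) + 1) + (α : ℂ) * Complex.I) /
            ((((Real.sqrt (1 + α ^ 2) - 1) / (Real.sqrt (1 + α ^ 2) + 1)) ^ n * ρ : ℝ) : ℂ)) /
         (z - (starRingEnd ℂ) (((2 * (k : ℂ) + 1) + (α : ℂ) * Complex.I) /
            ((((Real.sqrt (1 + α ^ 2) - 1) / (Real.sqrt (1 + α ^ 2) + 1)) ^ n * ρ : ℝ) : ℂ)))‖ < ε := by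
  classical
  set s := Real.sqrt (1 + α ^ 2) with hs_def
  have hs2 : s ^ 2 = 1 + α ^ 2 := Real.sq_sqrt (by positivity)
  have hs0 : 0 ≤ s := Real.sqrt_nonneg _
  have hs1 : 1 < s := by nlinarith
  set β := (s - 1) / (s + 1) with hβ_def
  have hβ0 : 0 < β := div_pos (by linarith) (by linarith)
  have hβ1 : β < 1 := by rw [div_lt_one (by linarith)]; linarith
  set y := z.im with hy_def
  have hy0 : 0 < y :=
    lt_of_lt_of_le (div_pos (mul_pos hα (by linarith)) (mul_pos hρ (by linarith))) hz
  -- `ε` bound squared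
  have hq0 : (0:ℝ) < 1 + 2 * α ^ 2 := by positivity
  have hqs : Real.sqrt (1 + 2 * α ^ 2) > 0 := Real.sqrt_pos.mpr hq0
  have h3 : 1 < ε ^ 2 * (1 + 2 * α ^ 2) := by
    rw [div_lt_iff₀ hqs] at hε
    nlinarith [Real.sq_sqrt hq0.le, hε, hqs]
  -- choose n
  have hUpos : (0:ℝ) < s * (s + 1) / α := by
    apply div_pos _ hα; nlinarith
  have hex : ∃ n : ℕ, y * β ^ n * ρ ≤ s * (s + 1) / α := by
    obtain ⟨n, hn⟩ := exists_pow_lt_of_lt_one (div_pos hUpos (mul_pos hy0 hρ)) hβ1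
    refine ⟨n, ?_⟩
    rw [lt_div_iff₀ (mul_pos hy0 hρ)] at hn
    nlinarith
  set n := Nat.find hex with hn_def
  have hwU : y * β ^ n * ρ ≤ s * (s + 1) / α := Nat.find_spec hex
  have hwL : s * (s - 1) / α ≤ y * β ^ n * ρ := by
    have hLU : β * (s * (s + 1) / α) = s * (s - 1) / α := by
      rw [hβ_def]; field_simp
    match hn0 : n with
    | 0 =>
      -- y * ρ ≥ α s/(s+1) = s(s-1)/α
      have h1 : α * s / (ρ * (s + 1)) ≤ y := hz
      rw [div_le_iff₀ hα]
      rw [div_le_iff₀ (mul_pos hρ (by linarith : (0:ℝ) < s + 1))] at h1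
      have : α ^ 2 = (s - 1) * (s + 1) := by nlinarith
      nlinarith
    | m + 1 =>
      have hm : ¬ y * β ^ m * ρ ≤ s * (s + 1) / α := by
        have := Nat.find_min hex (by omega : m < n)
        simpa using this
      push_neg at hm
      have : β * (s * (s + 1) / α) < β * (y * β ^ m * ρ) := by
        exact mul_lt_mul_of_pos_left hm hβ0
      rw [hLU] at this
      calc s * (s - 1) / α ≤ β * (y * β ^ m * ρ) := this.le
        _ = y * β ^ (m + 1) * ρ := by ring
  set d := β ^ n * ρ with hd_def
  have hd0 : 0 < d := mul_pos (pow_pos hβ0 n) hρ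
  set x := z.re with hx_def
  -- choose k
  set k : ℤ := ⌊x * d / 2⌋ with hk_def
  have hkle : (k : ℝ) ≤ x * d / 2 := Int.floor_le _
  have hklt : x * d / 2 < k + 1 := Int.lt_floor_add_one _
  have hB : (x * d - (2 * (k:ℝ) + 1)) ^ 2 ≤ 1 := by nlinarith
  -- the quadratic condition on w = y * d
  have hs4 : s ^ 4 = (1 + α ^ 2) ^ 2 := by
    rw [show s ^ 4 = (s ^ 2) ^ 2 by ring, hs2]
  have h2 : α * (y * d) ^ 2 + α * s ^ 2 ≤ 2 * s ^ 2 * (y * d) := by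
    have hL' : s * (s - 1) ≤ (y * d) * α := by
      rw [div_le_iff₀ hα] at hwL; nlinarith
    have hU' : (y * d) * α ≤ s * (s + 1) := by
      rw [le_div_iff₀ hα] at hwU; nlinarith
    have hprod : 0 ≤ ((y * d) * α - s * (s - 1)) * (s * (s + 1) - (y * d) * α) :=
      mul_nonneg (by linarith) (by linarith)
    rw [← mul_le_mul_iff_right₀ hα]
    nlinarith [hprod, hs4, hs2]
  refine ⟨k, n, ?_⟩
  rw [← hd_def]
  set L : ℂ := ((2 * (k : ℂ) + 1) + (α : ℂ) * Complex.I) / ((d : ℝ) : ℂ) with hL_def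
  have hLre : L.re = (2 * (k:ℝ) + 1) / d := by
    rw [hL_def, Complex.div_ofReal_re]; simp
  have hLim : L.im = α / d := by
    rw [hL_def, Complex.div_ofReal_im]; simp
  have hmain := real_key α s ε d (2 * (k:ℝ) + 1) x y hα hd0 hy0 hs2 hB h2 h3
  have hden_im : (z - (starRingEnd ℂ) L).im = y + α / d := by
    simp [Complex.sub_im, Complex.conj_im, hLim, hy_def]
  have hden_pos : 0 < ‖z - (starRingEnd ℂ) L‖ := by
    have h1 : |(z - (starRingEnd ℂ) L).im| ≤ ‖z - (starRingEnd ℂ) L‖ :=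
      Complex.abs_im_le_norm _
    have h2' : 0 < y + α / d := by positivity
    rw [hden_im] at h1
    calc (0:ℝ) < y + α / d := h2'
      _ ≤ |y + α / d| := le_abs_self _
      _ ≤ _ := h1
  rw [norm_div, div_lt_iff₀ hden_pos]
  have hε0 : 0 < ε := lt_trans (div_pos one_pos hqs) hε
  refine lt_of_pow_lt_pow_left₀ 2 (mul_nonneg hε0.le (norm_nonneg _)) ?_
  rw [mul_pow, Complex.sq_norm, Complex.sq_norm, Complex.normSq_apply, Complex.normSq_apply]
  simp only [Complex.sub_re, Complex.sub_im, Complex.conj_re, Complex.conj_im, hLre, hLim]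
  push_cast
  nlinarith [hmain]
end

section
/- Let α, γ > 0, x ∈ ℝ and y > 0. Then |e^{−πγy} − e^{−πα}| / (1 − e^{−π(γy+α)}) ≤ |B_{α,γ}(x+iy)| ≤ (e^{−πγy} + e^{−πα}) / (1 + e^{−π(γy+α)}), where |B_{α,γ}(x+iy)|² = (e^{−2πγy} + e^{−2πα} + 2e^{−π(γy+α)}cos(πγx)) / (1 + e^{−2π(γy+α)} + 2e^{−π(γy+α)}cos(πγx)). -/
open Complex

private lemma Bag_aux (u v c B : ℝ) (hu0 : 0 < u) (hu1 : u < 1) (hv0 : 0 < v) (hv1 : v < 1)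
    (hc1 : c ≤ 1) (hc1' : -1 ≤ c) (hB0 : 0 ≤ B)
    (hBsq : B ^ 2 = (u * u + v * v + 2 * (u * v) * c) /
      (1 + (u * v) * (u * v) + 2 * (u * v) * c)) :
    |u - v| / (1 - u * v) ≤ B ∧ B ≤ (u + v) / (1 + u * v) := by
  have huv1 : u * v < 1 := by nlinarith
  have hD0 : (0:ℝ) < 1 + (u * v) * (u * v) + 2 * (u * v) * c := by
    nlinarith [sq_nonneg (1 - u * v), mul_pos hu0 hv0]
  constructor
  · refine le_of_pow_le_pow_left₀ two_ne_zero hB0 ?_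
    rw [hBsq, div_pow, _root_.sq_abs, div_le_div_iff₀ (pow_pos (by linarith : (0:ℝ) < 1 - u * v) 2) hD0]
    nlinarith [mul_nonneg (mul_nonneg (mul_nonneg (mul_pos hu0 hv0).le
      (by linarith : (0:ℝ) ≤ 1 + c)) (by nlinarith : (0:ℝ) ≤ 1 - u * u))
      (by nlinarith : (0:ℝ) ≤ 1 - v * v)]
  · refine le_of_pow_le_pow_left₀ two_ne_zero (by positivity) ?_
    rw [hBsq, div_pow, div_le_div_iff₀ hD0 (by positivity)]
    nlinarith [mul_nonneg (mul_nonneg (mul_nonneg (mul_pos hu0 hv0).le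
      (by linarith : (0:ℝ) ≤ 1 - c)) (by nlinarith : (0:ℝ) ≤ 1 - u * u))
      (by nlinarith : (0:ℝ) ≤ 1 - v * v)]

/-- two-sided estimate for `|B_{α,γ}(x+iy)|`, together with the exact
formula for its square. -/
theorem Bag_modulus_bounds (α γ : ℝ) (hα : 0 < α) (hγ : 0 < γ) (x y : ℝ) (hy : 0 < y) :
    |Real.exp (-(Real.pi * γ * y)) - Real.exp (-(Real.pi * α))| /
        (1 - Real.exp (-(Real.pi * (γ * y + α)))) ≤
      ‖Bag α γ ((x : ℂ) + (y : ℂ) * Complex.I)‖ ∧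
    ‖Bag α γ ((x : ℂ) + (y : ℂ) * Complex.I)‖ ≤
      (Real.exp (-(Real.pi * γ * y)) + Real.exp (-(Real.pi * α))) /
        (1 + Real.exp (-(Real.pi * (γ * y + α)))) ∧
    (‖Bag α γ ((x : ℂ) + (y : ℂ) * Complex.I)‖) ^ 2 =
      (Real.exp (-(2 * Real.pi * γ * y)) + Real.exp (-(2 * Real.pi * α)) +
          2 * Real.exp (-(Real.pi * (γ * y + α))) * Real.cos (Real.pi * γ * x)) /
        (1 + Real.exp (-(2 * Real.pi * (γ * y + α))) +
          2 * Real.exp (-(Real.pi * (γ * y + α))) * Real.cos (Real.pi * γ * x)) := by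
  have hπ := Real.pi_pos
  obtain ⟨u, hu⟩ : ∃ u : ℝ, u = Real.exp (-(Real.pi * γ * y)) := ⟨_, rfl⟩
  obtain ⟨v, hv⟩ : ∃ v : ℝ, v = Real.exp (-(Real.pi * α)) := ⟨_, rfl⟩
  obtain ⟨θ, hθ⟩ : ∃ θ : ℝ, θ = Real.pi * γ * x := ⟨_, rfl⟩
  obtain ⟨c, hc⟩ : ∃ c : ℝ, c = Real.cos θ := ⟨_, rfl⟩
  have hu0 : 0 < u := hu ▸ Real.exp_pos _
  have hv0 : 0 < v := hv ▸ Real.exp_pos _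
  have hu1 : u < 1 := by
    rw [hu, show (1:ℝ) = Real.exp 0 by simp, Real.exp_lt_exp]
    nlinarith [mul_pos (mul_pos hπ hγ) hy]
  have hv1 : v < 1 := by
    rw [hv, show (1:ℝ) = Real.exp 0 by simp, Real.exp_lt_exp]
    nlinarith [mul_pos hπ hα]
  have hc1 : c ≤ 1 := hc ▸ Real.cos_le_one θ
  have hc1' : -1 ≤ c := hc ▸ Real.neg_one_le_cos θ
  -- rewrite the various exponentials in terms of u, v
  have huv : Real.exp (-(Real.pi * (γ * y + α))) = u * v := by
    rw [hu, hv, ← Real.exp_add]; congr 1; ring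
  have h2u : Real.exp (-(2 * Real.pi * γ * y)) = u * u := by
    rw [hu, ← Real.exp_add]; congr 1; ring
  have h2v : Real.exp (-(2 * Real.pi * α)) = v * v := by
    rw [hv, ← Real.exp_add]; congr 1; ring
  have h2uv : Real.exp (-(2 * Real.pi * (γ * y + α))) = (u * v) * (u * v) := by
    rw [hu, hv, ← Real.exp_add, ← Real.exp_add]; congr 1; ring
  -- the key form of Bag
  have harg : Complex.I * (Real.pi : ℂ) * (γ : ℂ) * ((x : ℂ) + (y : ℂ) * Complex.I)
      = ((-(Real.pi * γ * y) : ℝ) : ℂ) + (θ : ℝ) * Complex.I := by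
    have h := Complex.I_mul_I
    push_cast [hθ]
    linear_combination ((Real.pi : ℂ) * γ * y) * h
  have hBag : Bag α γ ((x : ℂ) + (y : ℂ) * Complex.I)
      = ((u : ℂ) * Complex.exp ((θ : ℝ) * Complex.I) + (v : ℂ)) /
        (1 + ((u * v : ℝ) : ℂ) * Complex.exp ((θ : ℝ) * Complex.I)) := by
    unfold Bag
    rw [harg, hu, hv]
    simp only [Complex.exp_add, Complex.exp_sub, Complex.ofReal_exp, Complex.ofReal_mul,
      Complex.ofReal_neg, Complex.exp_neg]
    ring
  -- numerator and denominator squared moduli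
  have hNsq : (‖(u : ℂ) * Complex.exp ((θ : ℝ) * Complex.I) + (v : ℂ)‖) ^ 2
      = u * u + v * v + 2 * (u * v) * c := by
    rw [Complex.sq_norm, Complex.normSq_apply, hc]
    simp only [Complex.add_re, Complex.add_im, Complex.mul_re, Complex.mul_im,
      Complex.ofReal_re, Complex.ofReal_im, Complex.exp_ofReal_mul_I_re,
      Complex.exp_ofReal_mul_I_im]
    nlinarith [Real.sin_sq_add_cos_sq θ]
  have hDsq : (‖1 + ((u * v : ℝ) : ℂ) * Complex.exp ((θ : ℝ) * Complex.I)‖) ^ 2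
      = 1 + (u * v) * (u * v) + 2 * (u * v) * c := by
    rw [Complex.sq_norm, Complex.normSq_apply, hc]
    simp only [Complex.add_re, Complex.add_im, Complex.mul_re, Complex.mul_im,
      Complex.ofReal_re, Complex.ofReal_im, Complex.exp_ofReal_mul_I_re,
      Complex.exp_ofReal_mul_I_im, Complex.one_re, Complex.one_im]
    nlinarith [Real.sin_sq_add_cos_sq θ]
  have hBsq : (‖Bag α γ ((x : ℂ) + (y : ℂ) * Complex.I)‖) ^ 2
      = (u * u + v * v + 2 * (u * v) * c) / (1 + (u * v) * (u * v) + 2 * (u * v) * c) := by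
    rw [hBag, norm_div, div_pow, hNsq, hDsq]
  rw [← hu, ← hv, huv, h2u, h2v, h2uv, ← hθ, ← hc]
  obtain ⟨h1, h2⟩ := Bag_aux u v c (‖Bag α γ ((x : ℂ) + (y : ℂ) * Complex.I)‖)
    hu0 hu1 hv0 hv1 hc1 hc1' (norm_nonneg _) hBsq
  exact ⟨h1, h2, hBsq⟩
end

section
/- Let α > 0, 0 < β < 1, ρ > 0 and let B(z) = ∏_{n=0}^∞ B_{α,β^nρ}(z). Then for every x ∈ ℝ and every y with 0 < y < α/ρ, one has the lower estimate |B(x+iy)| ≥ exp( − (1+e^{−πα})·πρy / ((e^{−πρy} − e^{−πα})(1−β)) ). -/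
open Complex

/-- The Blaschke product `B(z) = ∏_{n=0}^∞ B_{α,β^nρ}(z)`. -/
noncomputable def Bprod (α β ρ : ℝ) (z : ℂ) : ℂ :=
  ∏' n : ℕ, Bag α (β ^ n * ρ) z

private lemma quad_ineq (a s u : ℝ) (ha : 0 < a) (has : a < s) (hs1 : s ≤ 1) (hu : -s ≤ u) :
    (s - a)^2 * (1 + 2*a*u + a^2*s^2) ≤ (s^2 + 2*a*u + a^2) * (1 - a*s)^2 := by
  have h1 : (0:ℝ) ≤ 2*a*(1-a)*(1+a)*(1-s)*(1+s) := by
    have ha1 : a < 1 := lt_of_lt_of_le has hs1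
    have h2 : (0:ℝ) < s := lt_trans ha has
    apply mul_nonneg
    apply mul_nonneg
    apply mul_nonneg
    apply mul_nonneg
    all_goals linarith
  nlinarith [mul_nonneg h1 (by linarith : (0:ℝ) ≤ u + s)]

private lemma sq_le_imp (A B : ℝ) (hA : 0 ≤ A) (hB : 0 ≤ B) (h : A^2 ≤ B^2) : A ≤ B := by
  nlinarith

/-- Per-factor lower bound via the sharp estimate `(s-a)/(1-as)`. -/
private lemma abs_Bag_ge (α γ y x : ℝ) (hγ : 0 < γ) (hy : 0 < y)
    (h : Real.exp (-(Real.pi * α)) < Real.exp (-(Real.pi * γ * y))) :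
    (Real.exp (-(Real.pi*γ*y)) - Real.exp (-(Real.pi*α))) /
      (1 - Real.exp (-(Real.pi*α)) * Real.exp (-(Real.pi*γ*y))) ≤
      ‖Bag α γ ((x:ℂ) + (y:ℂ) * Complex.I)‖ := by
  set a := Real.exp (-(Real.pi*α)) with ha_def
  set s := Real.exp (-(Real.pi*γ*y)) with hs_def
  have ha : 0 < a := Real.exp_pos _
  have hπ := Real.pi_pos
  have hs1 : s < 1 := by
    rw [hs_def]
    rw [← Real.exp_zero]
    apply Real.exp_lt_exp.2
    nlinarith [mul_pos (mul_pos hπ hγ) hy]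
  set z : ℂ := (x:ℂ) + (y:ℂ) * Complex.I with hz_def
  set w : ℂ := Complex.exp (Complex.I * Real.pi * γ * z) with hw_def
  have habsw : ‖w‖ = s := by
    rw [hw_def, Complex.norm_exp, hs_def]
    congr 1
    simp [hz_def, Complex.mul_re, Complex.mul_im, Complex.add_re, Complex.add_im]
  have hBag : Bag α γ z = (w + (a:ℂ)) / (1 + w * (a:ℂ)) := by
    rw [Bag, hw_def]
    congr 1
    · congr 1
      rw [ha_def, Complex.ofReal_exp, Complex.ofReal_neg]
    · congr 1
      rw [Complex.exp_sub, ha_def, Complex.ofReal_exp, Complex.ofReal_neg, Complex.exp_neg]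
      field_simp
  set u : ℝ := w.re with hu_def
  have hnormw : u^2 + w.im^2 = s^2 := by
    have h5 : Complex.normSq w = s^2 := by
      rw [← Complex.sq_norm, habsw]
    rw [Complex.normSq_apply] at h5
    nlinarith [h5]
  have hus : -s ≤ u := by
    have h1 : |u| ≤ ‖w‖ := Complex.abs_re_le_norm w
    rw [habsw] at h1
    have := abs_le.1 h1
    linarith [this.1]
  have hnum : ‖w + (a:ℂ)‖^2 = s^2 + 2*a*u + a^2 := by
    rw [Complex.sq_norm, Complex.normSq_apply]
    simp [Complex.add_re, Complex.add_im]
    nlinarith [hnormw]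
  have hden : ‖1 + w * (a:ℂ)‖^2 = 1 + 2*a*u + a^2*s^2 := by
    rw [Complex.sq_norm, Complex.normSq_apply]
    simp [Complex.add_re, Complex.add_im, Complex.mul_re, Complex.mul_im]
    nlinarith [hnormw]
  have has : a < s := h
  have h1as : 0 < 1 - a*s := by nlinarith
  have hdenpos : 0 < ‖1 + w * (a:ℂ)‖ := by
    have h2 : (0:ℝ) < ‖1 + w * (a:ℂ)‖^2 := by
      rw [hden]; nlinarith
    nlinarith [norm_nonneg (1 + w * (a:ℂ)), h2]
  rw [hBag, norm_div]
  rw [div_le_div_iff₀ h1as hdenpos]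
  apply sq_le_imp
  · exact mul_nonneg (by linarith) hdenpos.le
  · exact mul_nonneg (norm_nonneg _) h1as.le
  · rw [mul_pow, mul_pow, hnum, hden]
    exact quad_ineq a s u ha has hs1.le hus

/-- Algebraic inequality: `(e^{-t}-a)/(1-a e^{-t}) ≥ e^{-Kt}`. -/
private lemma exp_ratio_le (a t T : ℝ) (ha : 0 < a) (ht : 0 ≤ t) (htT : t ≤ T)
    (haT : a < Real.exp (-T)) :
    Real.exp (-((1+a)/(Real.exp (-T) - a) * t)) ≤
      (Real.exp (-t) - a) / (1 - a * Real.exp (-t)) := by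
  set s := Real.exp (-t) with hs_def
  set K := (1+a)/(Real.exp (-T) - a) with hK_def
  have hTs : Real.exp (-T) ≤ s := Real.exp_le_exp.2 (by linarith)
  have has : a < s := lt_of_lt_of_le haT hTs
  have hs1 : s ≤ 1 := by
    rw [hs_def, ← Real.exp_zero]
    exact Real.exp_le_exp.2 (by linarith)
  have ha1 : a < 1 := lt_of_lt_of_le has hs1
  have h1as : 0 < 1 - a*s := by nlinarith
  have hDpos : 0 < Real.exp (-T) - a := by linarith
  have hKpos : 0 < K := div_pos (by linarith) hDpos
  have hKt : 0 < 1 + K*t := by nlinarith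
  have h1s : 1 - s ≤ t := by
    have := Real.add_one_le_exp (-t)
    linarith
  have hKD : K * (Real.exp (-T) - a) = 1 + a := div_mul_cancel₀ _ (ne_of_gt hDpos)
  have hkey : 1 - a*s ≤ (1 + K*t)*(s - a) := by
    have h3 : (1+a)*t ≤ K*t*(s-a) := by
      have h4 : K*t*(Real.exp (-T) - a) ≤ K*t*(s-a) := by
        apply mul_le_mul_of_nonneg_left (by linarith) (by positivity)
      calc (1+a)*t = K*(Real.exp (-T)-a)*t := by rw [hKD]
        _ = K*t*(Real.exp (-T)-a) := by ring
        _ ≤ K*t*(s-a) := h4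
    nlinarith
  have hexp : Real.exp (-(K*t)) ≤ 1/(1+K*t) := by
    rw [Real.exp_neg, one_div]
    apply inv_anti₀ hKt
    have := Real.add_one_le_exp (K*t)
    linarith
  calc Real.exp (-(K*t)) ≤ 1/(1+K*t) := hexp
    _ ≤ (s-a)/(1-a*s) := by
        rw [div_le_div_iff₀ hKt h1as]
        linarith
  
/-- Per-factor bound in exponential form. -/
private lemma factor_ge (α ρ y x γ : ℝ) (hy : 0 < y) (hγ : 0 < γ) (hγρ : γ ≤ ρ)
    (hT : Real.pi * ρ * y < Real.pi * α) :
    Real.exp (-((1+Real.exp (-(Real.pi*α)))/(Real.exp (-(Real.pi*ρ*y)) - Real.exp (-(Real.pi*α)))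
        * (Real.pi*γ*y))) ≤
      ‖Bag α γ ((x:ℂ) + (y:ℂ) * Complex.I)‖ := by
  have hπ := Real.pi_pos
  have ht0 : 0 ≤ Real.pi*γ*y := by positivity
  have htT : Real.pi*γ*y ≤ Real.pi*ρ*y := by nlinarith
  have haT : Real.exp (-(Real.pi*α)) < Real.exp (-(Real.pi*ρ*y)) :=
    Real.exp_lt_exp.2 (by linarith)
  have h1 := exp_ratio_le (Real.exp (-(Real.pi*α))) (Real.pi*γ*y) (Real.pi*ρ*y)
    (Real.exp_pos _) ht0 htT haT
  have h2 := abs_Bag_ge α γ y x hγ hy (Real.exp_lt_exp.2 (by nlinarith))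
  calc Real.exp _ ≤ (Real.exp (-(Real.pi*γ*y)) - Real.exp (-(Real.pi*α))) /
        (1 - Real.exp (-(Real.pi*α)) * Real.exp (-(Real.pi*γ*y))) := h1
    _ ≤ _ := h2

/-- lower estimate for `|B(x+iy)|` in the strip `0 < y < α/ρ`. -/
theorem Bprod_lower_estimate (α β ρ : ℝ) (hα : 0 < α) (hβ0 : 0 < β) (hβ1 : β < 1)
    (hρ : 0 < ρ) (x y : ℝ) (hy0 : 0 < y) (hy1 : y < α / ρ) :
    Real.exp (-((1 + Real.exp (-(Real.pi * α))) * (Real.pi * ρ * y) /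
        ((Real.exp (-(Real.pi * ρ * y)) - Real.exp (-(Real.pi * α))) * (1 - β)))) ≤
      ‖Bprod α β ρ ((x : ℂ) + (y : ℂ) * Complex.I)‖ := by
  have hπ := Real.pi_pos
  set a := Real.exp (-(Real.pi * α)) with ha_def
  have hρy : ρ * y < α := by
    have := (lt_div_iff₀ hρ).1 hy1
    linarith
  have hT : Real.pi * ρ * y < Real.pi * α := by nlinarith
  have haT : a < Real.exp (-(Real.pi*ρ*y)) := Real.exp_lt_exp.2 (by linarith)
  have hDpos : 0 < Real.exp (-(Real.pi*ρ*y)) - a := by linarith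
  set K := (1+a)/(Real.exp (-(Real.pi*ρ*y)) - a) with hK_def
  have hKpos : 0 < K := div_pos (by positivity) hDpos
  set E := (1 + a) * (Real.pi * ρ * y) /
      ((Real.exp (-(Real.pi * ρ * y)) - a) * (1 - β)) with hE_def
  have hEpos : 0 < E := by
    apply div_pos
    · have : 0 < Real.pi * ρ * y := by positivity
      positivity
    · apply mul_pos hDpos (by linarith)
  by_cases hm : Multipliable (fun n : ℕ => Bag α (β^n * ρ) ((x:ℂ) + (y:ℂ) * Complex.I))
  · have hP : HasProd (fun n : ℕ => Bag α (β^n * ρ) ((x:ℂ) + (y:ℂ) * Complex.I))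
        (Bprod α β ρ ((x:ℂ) + (y:ℂ) * Complex.I)) := hm.hasProd
    have hA : Filter.Tendsto
        (fun F : Finset ℕ => ∏ n ∈ F, ‖Bag α (β^n * ρ) ((x:ℂ) + (y:ℂ) * Complex.I)‖)
        Filter.atTop (nhds ‖Bprod α β ρ ((x:ℂ) + (y:ℂ) * Complex.I)‖) :=
      hP.norm
    apply ge_of_tendsto' hA
    intro F
    have hsumgeo : Summable (fun n : ℕ => (K * (Real.pi * ρ * y)) * β^n) :=
      (summable_geometric_of_lt_one hβ0.le hβ1).mul_left _
    have hsumle : ∑ n ∈ F, K * (Real.pi * (β^n * ρ) * y) ≤ E := by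
      have heq : ∀ n : ℕ, K * (Real.pi * (β^n * ρ) * y) = (K * (Real.pi * ρ * y)) * β^n := by
        intro n; ring
      calc ∑ n ∈ F, K * (Real.pi * (β^n * ρ) * y)
          = ∑ n ∈ F, (K * (Real.pi * ρ * y)) * β^n := by
            exact Finset.sum_congr rfl (fun n _ => heq n)
        _ ≤ ∑' n : ℕ, (K * (Real.pi * ρ * y)) * β^n := by
            apply hsumgeo.sum_le_tsum F (fun n _ => by positivity)
        _ = (K * (Real.pi * ρ * y)) * (1-β)⁻¹ := by
            rw [tsum_mul_left, tsum_geometric_of_lt_one hβ0.le hβ1]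
        _ = E := by
            rw [hE_def, hK_def]
            field_simp
    calc Real.exp (-E) ≤ Real.exp (-(∑ n ∈ F, K * (Real.pi * (β^n * ρ) * y))) := by
          apply Real.exp_le_exp.2; linarith
      _ = ∏ n ∈ F, Real.exp (-(K * (Real.pi * (β^n * ρ) * y))) := by
          rw [← Real.exp_sum, ← Finset.sum_neg_distrib]
      _ ≤ ∏ n ∈ F, ‖Bag α (β^n * ρ) ((x:ℂ) + (y:ℂ) * Complex.I)‖ := by
          apply Finset.prod_le_prod (fun n _ => (Real.exp_pos _).le)
          intro n _
          have hγ : 0 < β^n * ρ := by positivity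
          have hγρ : β^n * ρ ≤ ρ := by
            nlinarith [pow_le_one₀ hβ0.le hβ1.le (n := n)]
          exact factor_ge α ρ y x (β^n * ρ) hy0 hγ hγρ hT
  · rw [Bprod, tprod_eq_one_of_not_multipliable hm]
    simp only [norm_one]
    rw [← Real.exp_zero]
    apply Real.exp_le_exp.2
    linarith
end

section
/- Let α > 0, 0 < β < 1, ρ > 0 and let B(z) = ∏_{n=0}^∞ B_{α,β^nρ}(z). Then for every x ∈ ℝ and every y with y > α/ρ, one has the upper estimate |B(x+iy)| ≤ exp( − log(cosh(πα)) · log(ρy/α) / log(1/β) ). -/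
open Complex

lemma key_ineq_s8 {a s t b2 : ℝ} (ha0 : 0 < a) (ha1 : a < 1) (ht0 : 0 ≤ t)
    (ht : t^2 = s^2 + b2) (hst : s ≤ t) (ht1 : t ≤ 1) :
    ((s+a)^2 + b2) * (1+a*t)^2 ≤ (t+a)^2 * ((1+a*s)^2 + a^2*b2) := by
  have hb : b2 = t^2 - s^2 := by linarith
  rw [hb]
  nlinarith [mul_nonneg (mul_nonneg (mul_nonneg ha0.le
    (by nlinarith : (0:ℝ) ≤ 1 - a^2)) (by nlinarith : (0:ℝ) ≤ 1 - t^2))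
    (by linarith : (0:ℝ) ≤ t - s)]

lemma Bag_eq (α γ : ℝ) (z : ℂ) :
    Bag α γ z = (Complex.exp (Complex.I * Real.pi * γ * z) + (Real.exp (-(Real.pi * α)) : ℝ)) /
      (1 + (Real.exp (-(Real.pi * α)) : ℝ) * Complex.exp (Complex.I * Real.pi * γ * z)) := by
  unfold Bag
  rw [sub_eq_add_neg, Complex.exp_add]
  push_cast [Real.exp_neg, Complex.exp_neg, Complex.ofReal_exp]
  ring_nf

lemma abs_w (γ x y : ℝ) :
    ‖Complex.exp (Complex.I * Real.pi * γ * ((x:ℂ) + (y:ℂ) * Complex.I))‖ =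
      Real.exp (-(Real.pi * γ * y)) := by
  rw [Complex.norm_exp]
  congr 1
  simp [Complex.mul_re, Complex.mul_im]

lemma one_sub_le_abs_one_add {a : ℝ} (ha : 0 ≤ a) (w : ℂ) :
    1 - a * ‖w‖ ≤ ‖1 + (a:ℂ) * w‖ := by
  have h := norm_add_le (1 + (a:ℂ) * w) (-(a * w))
  simp only [add_neg_cancel_right, norm_one, norm_neg, norm_mul, Complex.norm_real, Real.norm_eq_abs] at h
  rw [_root_.abs_of_nonneg ha] at h
  linarith

lemma Bag_abs_le {α γ x y : ℝ} (hα : 0 < α) (hγ : 0 < γ) (hy : 0 < y) :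
    ‖Bag α γ ((x:ℂ) + (y:ℂ) * Complex.I)‖ ≤
      (Real.exp (-(Real.pi * γ * y)) + Real.exp (-(Real.pi * α))) /
        (1 + Real.exp (-(Real.pi * α)) * Real.exp (-(Real.pi * γ * y))) := by
  set z : ℂ := (x:ℂ) + (y:ℂ) * Complex.I with hz
  set w : ℂ := Complex.exp (Complex.I * Real.pi * γ * z) with hw
  set a : ℝ := Real.exp (-(Real.pi * α)) with ha
  set t : ℝ := Real.exp (-(Real.pi * γ * y)) with hT
  have ha0 : 0 < a := Real.exp_pos _
  have hpi := Real.pi_pos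
  have ha1 : a < 1 := by
    rw [ha, ← Real.exp_zero]
    exact Real.exp_lt_exp.mpr (by nlinarith)
  have ht0 : 0 < t := Real.exp_pos _
  have ht1 : t < 1 := by
    rw [hT, ← Real.exp_zero]
    exact Real.exp_lt_exp.mpr (by nlinarith [mul_pos (mul_pos hpi hγ) hy])
  have habsw : ‖w‖ = t := abs_w γ x y
  have hwre : w.re ≤ t := habsw ▸ Complex.re_le_norm w
  have hwsq : t^2 = w.re^2 + w.im^2 := by
    rw [← habsw, Complex.sq_norm, Complex.normSq_apply]; ring
  have hden_pos : 0 < ‖1 + (a:ℂ) * w‖ := by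
    have h1 : 1 - a * t ≤ ‖1 + (a:ℂ) * w‖ := by
      simpa [habsw] using one_sub_le_abs_one_add ha0.le w
    nlinarith
  rw [Bag_eq, norm_div]
  rw [div_le_div_iff₀ hden_pos (by nlinarith)]
  -- key step via squares
  have key : ‖w + (a:ℂ)‖ * (1 + a * t) ≤ (t + a) * ‖1 + (a:ℂ) * w‖ := by
    have h2 : (‖w + (a:ℂ)‖ * (1 + a * t))^2 ≤ ((t + a) * ‖1 + (a:ℂ) * w‖)^2 := by
      rw [mul_pow, mul_pow, Complex.sq_norm, Complex.sq_norm, Complex.normSq_apply,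
        Complex.normSq_apply]
      simp only [Complex.add_re, Complex.add_im, Complex.ofReal_re, Complex.ofReal_im,
        Complex.one_re, Complex.one_im, Complex.mul_re, Complex.mul_im]
      have := key_ineq_s8 ha0 ha1 ht0.le hwsq hwre ht1.le
      nlinarith [this]
    exact le_of_pow_le_pow_left₀ two_ne_zero (by positivity) h2
  exact key

lemma frac_le_one {a t : ℝ} (ha0 : 0 < a) (ha1 : a < 1) (ht0 : 0 < t) (ht1 : t ≤ 1) :
    (t + a) / (1 + a * t) ≤ 1 := by
  rw [div_le_one (by nlinarith)]
  nlinarith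

lemma frac_le_c {a t : ℝ} (ha0 : 0 < a) (ha1 : a < 1) (ht0 : 0 < t) (hta : t ≤ a) :
    (t + a) / (1 + a * t) ≤ 2 * a / (1 + a ^ 2) := by
  rw [div_le_div_iff₀ (by nlinarith) (by nlinarith)]
  nlinarith [mul_nonneg (by linarith : (0:ℝ) ≤ a - t) (by nlinarith : (0:ℝ) ≤ 1 - a^2)]

lemma Bag_abs_le_one {α γ x y : ℝ} (hα : 0 < α) (hγ : 0 < γ) (hy : 0 < y) :
    ‖Bag α γ ((x:ℂ) + (y:ℂ) * Complex.I)‖ ≤ 1 := by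
  refine (Bag_abs_le hα hγ hy).trans ?_
  have hpi := Real.pi_pos
  have ha0 : 0 < Real.exp (-(Real.pi * α)) := Real.exp_pos _
  have ha1 : Real.exp (-(Real.pi * α)) < 1 := by
    rw [← Real.exp_zero]; exact Real.exp_lt_exp.mpr (by nlinarith)
  have ht0 : 0 < Real.exp (-(Real.pi * γ * y)) := Real.exp_pos _
  have ht1 : Real.exp (-(Real.pi * γ * y)) ≤ 1 := by
    rw [← Real.exp_zero]
    exact Real.exp_le_exp.mpr (by nlinarith [mul_pos (mul_pos hpi hγ) hy])
  exact frac_le_one ha0 ha1 ht0 ht1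

lemma Bag_abs_le_c {α γ x y : ℝ} (hα : 0 < α) (hγ : 0 < γ) (hy : 0 < y)
    (hαγ : α ≤ γ * y) :
    ‖Bag α γ ((x:ℂ) + (y:ℂ) * Complex.I)‖ ≤
      2 * Real.exp (-(Real.pi * α)) / (1 + Real.exp (-(Real.pi * α)) ^ 2) := by
  refine (Bag_abs_le hα hγ hy).trans ?_
  have hpi := Real.pi_pos
  have ha0 : 0 < Real.exp (-(Real.pi * α)) := Real.exp_pos _
  have ha1 : Real.exp (-(Real.pi * α)) < 1 := by
    rw [← Real.exp_zero]; exact Real.exp_lt_exp.mpr (by nlinarith)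
  have ht0 : 0 < Real.exp (-(Real.pi * γ * y)) := Real.exp_pos _
  have hta : Real.exp (-(Real.pi * γ * y)) ≤ Real.exp (-(Real.pi * α)) :=
    Real.exp_le_exp.mpr (by nlinarith)
  exact frac_le_c ha0 ha1 ht0 hta

lemma c_eq_exp_neg_log_cosh {α : ℝ} (hα : 0 < α) :
    2 * Real.exp (-(Real.pi * α)) / (1 + Real.exp (-(Real.pi * α)) ^ 2) =
      Real.exp (-(Real.log (Real.cosh (Real.pi * α)))) := by
  have hc : Real.exp (-Real.log (Real.cosh (Real.pi * α))) = (Real.cosh (Real.pi * α))⁻¹ := by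
    rw [Real.exp_neg, Real.exp_log (Real.cosh_pos _)]
  rw [hc, Real.cosh_eq]
  have hE : Real.exp (Real.pi * α) * Real.exp (-(Real.pi * α)) = 1 := by
    rw [← Real.exp_add]; simp
  have h1 : 0 < Real.exp (Real.pi * α) := Real.exp_pos _
  have h2 : 0 < Real.exp (-(Real.pi * α)) := Real.exp_pos _
  rw [inv_div, div_eq_div_iff (by nlinarith) (by nlinarith)]
  linear_combination 2 * hE

lemma re_I_pi_gamma (γ : ℝ) (z : ℂ) :
    (Complex.I * Real.pi * γ * z).re = -(Real.pi * γ * z.im) := by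
  simp [Complex.mul_re, Complex.mul_im]

lemma Bag_multipliable {α β ρ : ℝ} (hα : 0 < α) (hβ0 : 0 < β) (hβ1 : β < 1) (hρ : 0 < ρ)
    (z : ℂ) (hz : 0 < z.im) (hne : ∀ n : ℕ, Bag α (β ^ n * ρ) z ≠ 0) :
    Multipliable (fun n : ℕ => Bag α (β ^ n * ρ) z) := by
  have hpi := Real.pi_pos
  set a : ℝ := Real.exp (-(Real.pi * α)) with ha
  have ha0 : 0 < a := Real.exp_pos _
  have ha1 : a < 1 := by
    rw [ha, ← Real.exp_zero]; exact Real.exp_lt_exp.mpr (by nlinarith)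
  set C : ℝ := Real.pi * ρ * ‖z‖ + 1 with hC
  have hC0 : 0 < C := by positivity
  have hsum : Summable (fun n : ℕ => Complex.log (Bag α (β ^ n * ρ) z)) := by
    apply Summable.of_norm_bounded_eventually_nat (g := fun n => 3 * C * β ^ n)
      (((summable_geometric_of_lt_one hβ0.le hβ1).mul_left _))
    have hev : ∀ᶠ n : ℕ in Filter.atTop, β ^ n * C ≤ 1 / 4 := by
      have ht : Filter.Tendsto (fun n : ℕ => β ^ n * C) Filter.atTop (nhds (0 * C)) :=
        (tendsto_pow_atTop_nhds_zero_of_lt_one hβ0.le hβ1).mul_const C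
      rw [zero_mul] at ht
      exact ht.eventually_le_const (by norm_num)
    filter_upwards [hev] with n hn
    set γ : ℝ := β ^ n * ρ with hγdef
    have hγ : 0 < γ := by positivity
    set w : ℂ := Complex.exp (Complex.I * Real.pi * γ * z) with hw
    have habsw : ‖w‖ = Real.exp (-(Real.pi * γ * z.im)) := by
      rw [hw, Complex.norm_exp, re_I_pi_gamma]
    have habsw1 : ‖w‖ ≤ 1 := by
      rw [habsw, ← Real.exp_zero]
      exact Real.exp_le_exp.mpr (by nlinarith [mul_pos (mul_pos hpi hγ) hz])
    have hden : (0:ℝ) < 1 - a := by linarith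
    have hdenpos : 1 - a ≤ ‖1 + (a:ℂ) * w‖ := by
      have := one_sub_le_abs_one_add ha0.le w
      nlinarith
    have hdenne : (1 : ℂ) + (a:ℂ) * w ≠ 0 := by
      intro h
      rw [h, norm_zero] at hdenpos
      linarith
    -- |w - 1| bound
    have hargabs : ‖Complex.I * Real.pi * γ * z‖ = Real.pi * γ * ‖z‖ := by
      simp only [norm_mul, Complex.norm_I, Complex.norm_real, Real.norm_eq_abs, one_mul,
        abs_of_pos hpi, abs_of_pos hγ]
    have hargle : Real.pi * γ * ‖z‖ ≤ β ^ n * C := by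
      rw [hγdef, hC]
      have : Real.pi * (β ^ n * ρ) * ‖z‖ = β ^ n * (Real.pi * ρ * ‖z‖) := by
        ring
      rw [this]
      have hb : (0:ℝ) ≤ β ^ n := by positivity
      nlinarith
    have hquarter : Real.pi * γ * ‖z‖ ≤ 1 / 4 := le_trans hargle hn
    have hw1 : ‖w - 1‖ ≤ 2 * (β ^ n * C) := by
      calc ‖w - 1‖ ≤ 2 * ‖Complex.I * Real.pi * γ * z‖ :=
            Complex.norm_exp_sub_one_le (by rw [hargabs]; linarith)
        _ ≤ 2 * (β ^ n * C) := by rw [hargabs]; linarith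
    -- Bag = 1 + u
    set u : ℂ := (w - 1) * ((1:ℂ) - (a:ℂ)) / (1 + (a:ℂ) * w) with hu
    have hBag : Bag α γ z = 1 + u := by
      rw [Bag_eq, hu, ← ha, ← hw]
      rw [div_eq_iff hdenne, add_mul, div_mul_cancel₀ _ hdenne]
      ring
    have huabs : ‖u‖ ≤ ‖w - 1‖ := by
      rw [hu, norm_div, norm_mul]
      rw [div_le_iff₀ (by linarith)]
      have h1a : ‖(1:ℂ) - (a:ℂ)‖ = 1 - a := by
        rw [show (1:ℂ) - (a:ℂ) = ((1 - a : ℝ) : ℂ) by push_cast; ring, Complex.norm_real, Real.norm_eq_abs,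
          _root_.abs_of_pos hden]
      rw [h1a]
      have := norm_nonneg (w - 1)
      nlinarith
    have huhalf : ‖u‖ ≤ 1 / 2 := by
      calc ‖u‖ ≤ ‖w - 1‖ := huabs
        _ ≤ 2 * (β ^ n * C) := hw1
        _ ≤ 1 / 2 := by linarith
    have hlog : ‖Complex.log (1 + u)‖ ≤ 3 / 2 * ‖u‖ :=
      Complex.norm_log_one_add_half_le_self huhalf
    rw [hBag]
    calc ‖Complex.log (1 + u)‖ ≤ 3 / 2 * ‖u‖ := hlog
      _ ≤ 3 / 2 * (2 * (β ^ n * C)) := by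
          have : ‖u‖ ≤ 2 * (β ^ n * C) := by
            exact le_trans huabs hw1
          nlinarith [norm_nonneg u]
      _ = 3 * C * β ^ n := by ring
  exact Complex.multipliable_of_summable_log hsum
/-- upper estimate for `|B(x+iy)|` in the half-plane `y > α/ρ`. -/
theorem Bprod_upper_estimate (α β ρ : ℝ) (hα : 0 < α) (hβ0 : 0 < β) (hβ1 : β < 1)
    (hρ : 0 < ρ) (x y : ℝ) (hy : α / ρ < y) :
    ‖Bprod α β ρ ((x : ℂ) + (y : ℂ) * Complex.I)‖ ≤
      Real.exp (-(Real.log (Real.cosh (Real.pi * α)) * Real.log (ρ * y / α) /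
        Real.log (1 / β))) := by
  have hpi := Real.pi_pos
  set z : ℂ := (x:ℂ) + (y:ℂ) * Complex.I with hzdef
  have hy0 : 0 < y := lt_trans (by positivity) hy
  have hzim : z.im = y := by simp [hzdef]
  have hαρy : α < ρ * y := by
    have := (div_lt_iff₀ hρ).mp hy
    linarith
  set L : ℝ := Real.log (Real.cosh (Real.pi * α)) with hL
  have hL0 : 0 ≤ L := Real.log_nonneg (Real.one_le_cosh _)
  set N : ℝ := Real.log (ρ * y / α) / Real.log (1 / β) with hN
  have hA1 : 1 < ρ * y / α := (one_lt_div hα).mpr hαρy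
  have hB1 : 0 < Real.log (1 / β) := Real.log_pos (by rw [lt_div_iff₀ hβ0]; linarith)
  have hN0 : 0 < N := div_pos (Real.log_pos hA1) hB1
  set m : ℕ := ⌊N⌋.toNat + 1 with hm
  have hfloorc : ((⌊N⌋.toNat : ℤ) : ℝ) = ((⌊N⌋ : ℤ) : ℝ) := by
    rw [Int.toNat_of_nonneg (Int.floor_nonneg.mpr hN0.le)]
  have hNm : N ≤ (m : ℝ) := by
    have h1 : N < (⌊N⌋ : ℝ) + 1 := Int.lt_floor_add_one N
    have h2 : ((m : ℕ) : ℝ) = ((⌊N⌋ : ℝ)) + 1 := by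
      rw [hm]
      push_cast [hfloorc]
      push_cast at hfloorc
      linarith [hfloorc]
    linarith
  set c : ℝ := 2 * Real.exp (-(Real.pi * α)) / (1 + Real.exp (-(Real.pi * α)) ^ 2) with hcdef
  have hc : c = Real.exp (-L) := c_eq_exp_neg_log_cosh hα
  have hc0 : 0 ≤ c := by positivity
  -- per-index bound for i < m
  have hcn : ∀ i : ℕ, i < m → α ≤ (β ^ i * ρ) * y := by
    intro i hi
    have hiN : (i : ℝ) ≤ N := by
      have : (i : ℝ) ≤ ((⌊N⌋.toNat : ℕ) : ℝ) := by
        exact_mod_cast Nat.le_of_lt_succ hi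
      push_cast at hfloorc
      calc (i:ℝ) ≤ ((⌊N⌋.toNat : ℕ) : ℝ) := this
        _ = (⌊N⌋ : ℝ) := hfloorc
        _ ≤ N := Int.floor_le N
    have hlogβ : Real.log β < 0 := Real.log_neg hβ0 hβ1
    have h1 : N * Real.log β ≤ (i : ℝ) * Real.log β :=
      mul_le_mul_of_nonpos_right hiN hlogβ.le
    have hNlog : N * Real.log β = Real.log (α / (ρ * y)) := by
      have h2 : Real.log (α / (ρ * y)) = -Real.log (ρ * y / α) := by
        rw [← Real.log_inv, inv_div]
      have hne : Real.log β ≠ 0 := ne_of_lt hlogβ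
      rw [h2, hN, one_div, Real.log_inv]
      field_simp
    have hβi : α / (ρ * y) ≤ β ^ i := by
      have hei : β ^ i = Real.exp ((i : ℝ) * Real.log β) := by
        rw [Real.exp_nat_mul, Real.exp_log hβ0]
      have h3 : Real.exp (N * Real.log β) ≤ Real.exp ((i:ℝ) * Real.log β) :=
        Real.exp_le_exp.mpr h1
      rw [hNlog, Real.exp_log (by positivity)] at h3
      rw [hei]; exact h3
    have hpos : 0 < ρ * y := by positivity
    have := (div_le_iff₀ hpos).mp hβi
    calc α ≤ β ^ i * (ρ * y) := this
      _ = (β ^ i * ρ) * y := by ring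
  -- reduce goal to exp (-(L*N))
  have hgoal : Real.exp (-(L * Real.log (ρ * y / α) / Real.log (1 / β))) =
      Real.exp (-(L * N)) := by
    rw [hN, mul_div_assoc]
  rw [hgoal]
  by_cases hzero : ∃ n : ℕ, Bag α (β ^ n * ρ) z = 0
  · obtain ⟨n0, h0⟩ := hzero
    have h0p : HasProd (fun n : ℕ => Bag α (β ^ n * ρ) z) 0 := by
      have hev : ∀ᶠ s : Finset ℕ in Filter.atTop,
          (0 : ℂ) = ∏ i ∈ s, Bag α (β ^ i * ρ) z := by
        filter_upwards [Filter.eventually_ge_atTop ({n0} : Finset ℕ)] with s hs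
        exact (Finset.prod_eq_zero (hs (Finset.mem_singleton_self n0)) h0).symm
      exact Filter.Tendsto.congr' hev tendsto_const_nhds
    have : Bprod α β ρ z = 0 := h0p.tprod_eq
    rw [this, norm_zero]
    positivity
  · push_neg at hzero
    have hM := Bag_multipliable hα hβ0 hβ1 hρ z (by rw [hzim]; exact hy0) hzero
    have hP : HasProd (fun n : ℕ => ‖Bag α (β ^ n * ρ) z‖)
        ‖∏' n : ℕ, Bag α (β ^ n * ρ) z‖ := hM.hasProd.norm
    have key : ‖∏' n : ℕ, Bag α (β ^ n * ρ) z‖ ≤ Real.exp (-(L * N)) := by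
      refine le_of_tendsto hP ?_
      filter_upwards [Filter.eventually_ge_atTop (Finset.range m)] with s hs
      have habs_le_one : ∀ i : ℕ, ‖Bag α (β ^ i * ρ) z‖ ≤ 1 := fun i => by
        rw [hzdef]
        exact Bag_abs_le_one hα (by positivity) hy0
      have habs_nonneg : ∀ i : ℕ, (0:ℝ) ≤ ‖Bag α (β ^ i * ρ) z‖ := fun i => norm_nonneg _
      calc (∏ i ∈ s, ‖Bag α (β ^ i * ρ) z‖)
          = (∏ i ∈ s \ Finset.range m, ‖Bag α (β ^ i * ρ) z‖) *
            ∏ i ∈ Finset.range m, ‖Bag α (β ^ i * ρ) z‖ := (Finset.prod_sdiff hs).symm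
        _ ≤ 1 * ∏ i ∈ Finset.range m, ‖Bag α (β ^ i * ρ) z‖ := by
            apply mul_le_mul_of_nonneg_right
            · exact Finset.prod_le_one (fun i _ => habs_nonneg i) (fun i _ => habs_le_one i)
            · exact Finset.prod_nonneg (fun i _ => habs_nonneg i)
        _ = ∏ i ∈ Finset.range m, ‖Bag α (β ^ i * ρ) z‖ := one_mul _
        _ ≤ ∏ _i ∈ Finset.range m, c := by
            apply Finset.prod_le_prod (fun i _ => habs_nonneg i)
            intro i hi
            rw [hzdef, hcdef]
            exact Bag_abs_le_c hα (by positivity) hy0 (hcn i (Finset.mem_range.mp hi))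
        _ = c ^ m := by rw [Finset.prod_const c, Finset.card_range]
        _ = Real.exp (-L) ^ m := by rw [hc]
        _ = Real.exp ((m : ℝ) * (-L)) := (Real.exp_nat_mul (-L) m).symm
        _ ≤ Real.exp (-(L * N)) := Real.exp_le_exp.mpr (by nlinarith)
    rw [show Bprod α β ρ z = ∏' n : ℕ, Bag α (β ^ n * ρ) z from rfl]
    exact key
end

section
/- Let α > 0, β = (√(1+α²)−1)/(√(1+α²)+1), ρ > 0, σ(B) = {(2k+1+iα)/(β^nρ) : k ∈ ℤ, n ≥ 0}, and for n ≥ 1 let v_n = i·α√(1+α²)/(ρβⁿ(√(1+α²)+1)). Then for every n ≥ 1 and every λ ∈ σ(B) one has |(v_n−λ)/(v_n−conj λ)| ≥ 1/√(1+2α²), and equality holds for the four nearest zeros λ = (±1+iα)/(ρβⁿ) and λ = (±1+iα)/(ρβⁿ⁻¹). -/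
open Complex


private lemma sqrt_ineq' (a N D : ℝ) (ha : 0 < a) (hD : 0 < D) (h : D ≤ a * N) :
    1 / Real.sqrt a ≤ Real.sqrt (N / D) := by
  rw [one_div, ← Real.sqrt_inv]
  apply Real.sqrt_le_sqrt
  rw [inv_eq_one_div, div_le_div_iff₀ ha hD]
  linarith

private lemma sqrt_eq' (a N D : ℝ) (ha : 0 < a) (hD : 0 < D) (h : D = a * N) :
    Real.sqrt (N / D) = 1 / Real.sqrt a := by
  have hN : N ≠ 0 := by
    rintro rfl; rw [mul_zero] at h; exact hD.ne' h
  have : N / D = 1 / a := by rw [h]; field_simp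
  rw [this, one_div, one_div, Real.sqrt_inv]

private lemma bracketEq (α s u : ℝ) (hs : s ^ 2 = 1 + α ^ 2) :
    α * (α * (1 + (u - α) ^ 2) - 2 * u) = (α * u - s * (s - 1)) * (α * u - s * (s + 1)) := by
  linear_combination (-(s ^ 2) - α ^ 2 + 2 * α * u) * hs

private lemma core_ineq (α u x : ℝ) (hα : 0 < α) (hx : 1 ≤ x ^ 2)
    (hbr : 2 * u ≤ α * (1 + (u - α) ^ 2)) :
    x ^ 2 + (u + α) ^ 2 ≤ (1 + 2 * α ^ 2) * (x ^ 2 + (u - α) ^ 2) := by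
  nlinarith [mul_le_mul_of_nonneg_left hbr hα.le, mul_le_mul_of_nonneg_left hx (sq_nonneg α)]

private lemma core_eq (α u x : ℝ) (hx : x ^ 2 = 1)
    (hbr : 2 * u = α * (1 + (u - α) ^ 2)) :
    x ^ 2 + (u + α) ^ 2 = (1 + 2 * α ^ 2) * (x ^ 2 + (u - α) ^ 2) := by
  linear_combination (-2*α^2)*hx + (2*α)*hbr

private lemma abs_formula (α t x c : ℝ) (hα : 0 < α) (ht : 0 < t) (hc : 0 < c) :
    ‖(((t:ℝ):ℂ) * Complex.I - ((x:ℂ) + (α:ℂ) * Complex.I) / ((c:ℝ):ℂ))‖ /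
      ‖(((t:ℝ):ℂ) * Complex.I -
        (starRingEnd ℂ) (((x:ℂ) + (α:ℂ) * Complex.I) / ((c:ℝ):ℂ)))‖ =
    Real.sqrt ((x ^ 2 + (t * c - α) ^ 2) / (x ^ 2 + (t * c + α) ^ 2)) := by
  have hc' : (c:ℝ) ≠ 0 := hc.ne'
  have h1 : ((x:ℂ) + (α:ℂ) * Complex.I) / ((c:ℝ):ℂ) =
      ((x / c : ℝ):ℂ) + ((α / c : ℝ):ℂ) * Complex.I := by
    push_cast; ring
  rw [h1]
  have hnum : ((t:ℝ):ℂ) * Complex.I - (((x/c : ℝ):ℂ) + ((α/c : ℝ):ℂ) * Complex.I) =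
      ((-(x/c) : ℝ):ℂ) + ((t - α/c : ℝ):ℂ) * Complex.I := by push_cast; ring
  have hden : ((t:ℝ):ℂ) * Complex.I -
      (starRingEnd ℂ) (((x/c : ℝ):ℂ) + ((α/c : ℝ):ℂ) * Complex.I) =
      ((-(x/c) : ℝ):ℂ) + ((t + α/c : ℝ):ℂ) * Complex.I := by
    rw [map_add, map_mul, Complex.conj_ofReal, Complex.conj_ofReal, Complex.conj_I]
    push_cast; ring
  rw [hnum, hden, Complex.norm_def, Complex.norm_def,
    Complex.normSq_add_mul_I, Complex.normSq_add_mul_I,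
    ← Real.sqrt_div (by positivity)]
  congr 1
  have hd1 : (0:ℝ) < (-(x/c)) ^ 2 + (t + α/c) ^ 2 := by positivity
  have hd2 : (0:ℝ) < x ^ 2 + (t * c + α) ^ 2 := by positivity
  rw [div_eq_div_iff hd1.ne' hd2.ne']
  field_simp

private lemma prodsign (β : ℝ) (h0 : 0 < β) (h1 : β < 1) (m n : ℕ) :
    0 ≤ (β ^ m - β ^ n) * (β ^ (m + 1) - β ^ n) := by
  rcases le_or_gt n m with h | h
  · have a1 : β ^ m ≤ β ^ n := pow_le_pow_of_le_one h0.le h1.le h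
    have a2 : β ^ (m + 1) ≤ β ^ n := pow_le_pow_of_le_one h0.le h1.le (h.trans (Nat.le_succ m))
    nlinarith [mul_nonneg (sub_nonneg.2 a1) (sub_nonneg.2 a2)]
  · have a1 : β ^ n ≤ β ^ m := pow_le_pow_of_le_one h0.le h1.le h.le
    have a2 : β ^ n ≤ β ^ (m + 1) := pow_le_pow_of_le_one h0.le h1.le h
    exact mul_nonneg (by linarith) (by linarith)

private lemma u_fact (α ρ β s t : ℝ) (hα : 0 < α) (hρ : 0 < ρ) (hs2 : s ^ 2 = 1 + α ^ 2)
    (hs1 : 1 < s) (hβ1 : β * (s + 1) = s - 1) (hβpos : 0 < β)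
    (n m : ℕ) (ht : t = α * s / (ρ * β ^ n * (s + 1))) :
    α * (α * (1 + (t * (β ^ m * ρ) - α) ^ 2) - 2 * (t * (β ^ m * ρ))) =
      (s ^ 2 * α ^ 2 / (β ^ n) ^ 2) * ((β ^ m - β ^ n) * (β ^ (m + 1) - β ^ n)) := by
  have hβn : (0:ℝ) < β ^ n := pow_pos hβpos n
  have hsp : (0:ℝ) < s + 1 := by linarith
  set u := t * (β ^ m * ρ) with hu
  set w := β ^ m / β ^ n with hwdef
  have hαu : α * u = s * (s - 1) * w := by
    rw [hu, ht, hwdef]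
    field_simp
    linear_combination (-1) * hs2
  have e1 : α * u - s * (s - 1) = s * (s - 1) * (w - 1) := by linear_combination hαu
  have e2 : α * u - s * (s + 1) = s * (s + 1) * (β * w - 1) := by
    linear_combination hαu - (s * w) * hβ1
  have e3 : (s - 1) * (s + 1) = α ^ 2 := by linear_combination hs2
  have hfac : (α * u - s * (s - 1)) * (α * u - s * (s + 1)) =
      (s ^ 2 * α ^ 2) * ((w - 1) * (β * w - 1)) := by
    rw [e1, e2]
    linear_combination (s ^ 2 * (w - 1) * (β * w - 1)) * e3
  have hw1 : w - 1 = (β ^ m - β ^ n) / β ^ n := by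
    rw [hwdef]; field_simp
  have hw2 : β * w - 1 = (β ^ (m + 1) - β ^ n) / β ^ n := by
    rw [hwdef]; field_simp; ring
  rw [bracketEq α s u hs2, hfac, hw1, hw2]
  ring

private lemma bracket_ineq (α ρ β s t : ℝ) (hα : 0 < α) (hρ : 0 < ρ) (hs2 : s ^ 2 = 1 + α ^ 2)
    (hs1 : 1 < s) (hβ1 : β * (s + 1) = s - 1) (hβpos : 0 < β) (hβlt : β < 1)
    (n m : ℕ) (ht : t = α * s / (ρ * β ^ n * (s + 1))) :
    2 * (t * (β ^ m * ρ)) ≤ α * (1 + (t * (β ^ m * ρ) - α) ^ 2) := by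
  have h := u_fact α ρ β s t hα hρ hs2 hs1 hβ1 hβpos n m ht
  have hG := prodsign β hβpos hβlt m n
  have hpos : (0:ℝ) ≤ s ^ 2 * α ^ 2 / (β ^ n) ^ 2 := by positivity
  have key : 0 ≤ α * (α * (1 + (t * (β ^ m * ρ) - α) ^ 2) - 2 * (t * (β ^ m * ρ))) := by
    rw [h]; exact mul_nonneg hpos hG
  nlinarith [key, hα]

private lemma bracket_eq (α ρ β s t : ℝ) (hα : 0 < α) (hρ : 0 < ρ) (hs2 : s ^ 2 = 1 + α ^ 2)
    (hs1 : 1 < s) (hβ1 : β * (s + 1) = s - 1) (hβpos : 0 < β)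
    (n m : ℕ) (ht : t = α * s / (ρ * β ^ n * (s + 1)))
    (hzero : (β ^ m - β ^ n) * (β ^ (m + 1) - β ^ n) = 0) :
    2 * (t * (β ^ m * ρ)) = α * (1 + (t * (β ^ m * ρ) - α) ^ 2) := by
  have h := u_fact α ρ β s t hα hρ hs2 hs1 hβ1 hβpos n m ht
  rw [hzero, mul_zero] at h
  rcases mul_eq_zero.mp h with h' | h'
  · exact absurd h' hα.ne'
  · linarith

private lemma main_ineq (α ρ β s t : ℝ) (hα : 0 < α) (hρ : 0 < ρ) (hs2 : s ^ 2 = 1 + α ^ 2)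
    (hs1 : 1 < s) (hβ1 : β * (s + 1) = s - 1) (hβpos : 0 < β) (hβlt : β < 1)
    (n m : ℕ) (ht : t = α * s / (ρ * β ^ n * (s + 1))) (x : ℝ) (hx : 1 ≤ x ^ 2) :
    1 / Real.sqrt (1 + 2 * α ^ 2) ≤
      Real.sqrt ((x ^ 2 + (t * (β ^ m * ρ) - α) ^ 2) / (x ^ 2 + (t * (β ^ m * ρ) + α) ^ 2)) := by
  apply sqrt_ineq' _ _ _ (by positivity)
    (by nlinarith [sq_nonneg (t * (β ^ m * ρ) + α)] : (0:ℝ) < x ^ 2 + (t * (β ^ m * ρ) + α) ^ 2)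
  exact core_ineq α (t * (β ^ m * ρ)) x hα hx
    (bracket_ineq α ρ β s t hα hρ hs2 hs1 hβ1 hβpos hβlt n m ht)

private lemma main_eq (α ρ β s t : ℝ) (hα : 0 < α) (hρ : 0 < ρ) (hs2 : s ^ 2 = 1 + α ^ 2)
    (hs1 : 1 < s) (hβ1 : β * (s + 1) = s - 1) (hβpos : 0 < β)
    (n m : ℕ) (ht : t = α * s / (ρ * β ^ n * (s + 1))) (x : ℝ) (hx : x ^ 2 = 1)
    (hzero : (β ^ m - β ^ n) * (β ^ (m + 1) - β ^ n) = 0) :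
    Real.sqrt ((x ^ 2 + (t * (β ^ m * ρ) - α) ^ 2) / (x ^ 2 + (t * (β ^ m * ρ) + α) ^ 2)) =
      1 / Real.sqrt (1 + 2 * α ^ 2) := by
  apply sqrt_eq' _ _ _ (by positivity)
    (by nlinarith [sq_nonneg (t * (β ^ m * ρ) + α)] : (0:ℝ) < x ^ 2 + (t * (β ^ m * ρ) + α) ^ 2)
  exact core_eq α (t * (β ^ m * ρ)) x hx
    (bracket_eq α ρ β s t hα hρ hs2 hs1 hβ1 hβpos n m ht hzero)


/-- the points `v_n = iα√(1+α²)/(ρβⁿ(√(1+α²)+1))` lie at pseudohyperbolic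
distance at least `1/√(1+2α²)` from every zero of `B`, with equality for the four
nearest zeros `(±1+iα)/(ρβⁿ)` and `(±1+iα)/(ρβⁿ⁻¹)`. -/
theorem vn_distance_to_zero_set
    (α ρ : ℝ) (hα : 0 < α) (hρ : 0 < ρ)
    (β : ℝ) (hβ : β = (Real.sqrt (1 + α ^ 2) - 1) / (Real.sqrt (1 + α ^ 2) + 1))
    (v : ℕ → ℂ)
    (hv : ∀ n : ℕ, v n =
      ((α * Real.sqrt (1 + α ^ 2) / (ρ * β ^ n * (Real.sqrt (1 + α ^ 2) + 1)) : ℝ) : ℂ) *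
        Complex.I)
    (n : ℕ) (hn : 1 ≤ n) :
    (∀ lam : ℂ, (∃ k : ℤ, ∃ m : ℕ,
        lam = ((2 * (k : ℂ) + 1) + (α : ℂ) * Complex.I) / ((β ^ m * ρ : ℝ) : ℂ)) →
      1 / Real.sqrt (1 + 2 * α ^ 2) ≤
        ‖(v n - lam) / (v n - (starRingEnd ℂ) lam)‖) ∧
    (∀ lam : ℂ,
      (lam = (1 + (α : ℂ) * Complex.I) / ((ρ * β ^ n : ℝ) : ℂ) ∨
       lam = (-1 + (α : ℂ) * Complex.I) / ((ρ * β ^ n : ℝ) : ℂ) ∨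
       lam = (1 + (α : ℂ) * Complex.I) / ((ρ * β ^ (n - 1) : ℝ) : ℂ) ∨
       lam = (-1 + (α : ℂ) * Complex.I) / ((ρ * β ^ (n - 1) : ℝ) : ℂ)) →
      ‖(v n - lam) / (v n - (starRingEnd ℂ) lam)‖ =
        1 / Real.sqrt (1 + 2 * α ^ 2)) := by
  have h1α : (0:ℝ) < 1 + α ^ 2 := by positivity
  set s := Real.sqrt (1 + α ^ 2) with hsdef
  have hs2 : s ^ 2 = 1 + α ^ 2 := Real.sq_sqrt h1α.le
  have hs1 : 1 < s := by nlinarith [Real.sqrt_nonneg (1 + α ^ 2), hs2]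
  have hsp : (0:ℝ) < s + 1 := by linarith
  have hβ1 : β * (s + 1) = s - 1 := by rw [hβ]; field_simp
  have hβpos : 0 < β := by rw [hβ]; exact div_pos (by linarith) hsp
  have hβlt : β < 1 := by rw [hβ, div_lt_one hsp]; linarith
  set t := α * s / (ρ * β ^ n * (s + 1)) with htdef
  have hvn : v n = ((t : ℝ) : ℂ) * Complex.I := hv n
  have ht0 : 0 < t :=
    div_pos (mul_pos hα (by linarith)) (mul_pos (mul_pos hρ (pow_pos hβpos n)) hsp)
  constructor
  · rintro lam ⟨k, m, rfl⟩
    have hc0 : 0 < β ^ m * ρ := mul_pos (pow_pos hβpos m) hρ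
    have hre : (2 * (k : ℂ) + 1) + (α : ℂ) * Complex.I =
        (((2 * (k : ℝ) + 1 : ℝ)) : ℂ) + (α : ℂ) * Complex.I := by push_cast; ring
    rw [hvn, hre, norm_div, abs_formula α t (2 * (k : ℝ) + 1) (β ^ m * ρ) hα ht0 hc0]
    have hx : 1 ≤ (2 * (k : ℝ) + 1) ^ 2 := by
      rcases le_or_gt 0 k with hk | hk
      · have hk' : (0:ℝ) ≤ (k : ℝ) := by exact_mod_cast hk
        nlinarith
      · have hki : k + 1 ≤ 0 := Int.lt_iff_add_one_le.mp hk
        have hk' : (k : ℝ) ≤ -1 := by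
          have : ((k+1 : ℤ) : ℝ) ≤ 0 := by exact_mod_cast hki
          push_cast at this; linarith
        nlinarith
    exact main_ineq α ρ β s t hα hρ hs2 hs1 hβ1 hβpos hβlt n m htdef _ hx
  · intro lam h
    have hn1 : n - 1 + 1 = n := Nat.succ_pred_eq_of_pos hn
    have hz1 : (β ^ n - β ^ n) * (β ^ (n + 1) - β ^ n) = 0 := by rw [sub_self, zero_mul]
    have hz2 : (β ^ (n-1) - β ^ n) * (β ^ (n - 1 + 1) - β ^ n) = 0 := by
      rw [hn1, sub_self, mul_zero]
    have hre1 : (1 : ℂ) + (α : ℂ) * Complex.I =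
        (((1 : ℝ)) : ℂ) + (α : ℂ) * Complex.I := by norm_num
    have hre2 : (-1 : ℂ) + (α : ℂ) * Complex.I =
        (((-1 : ℝ)) : ℂ) + (α : ℂ) * Complex.I := by norm_num
    have hccn : ((ρ * β ^ n : ℝ) : ℂ) = ((β ^ n * ρ : ℝ) : ℂ) := by rw [mul_comm]
    have hccn' : ((ρ * β ^ (n-1) : ℝ) : ℂ) = ((β ^ (n-1) * ρ : ℝ) : ℂ) := by rw [mul_comm]
    have hc0 : 0 < β ^ n * ρ := mul_pos (pow_pos hβpos n) hρ
    have hc0' : 0 < β ^ (n-1) * ρ := mul_pos (pow_pos hβpos (n-1)) hρ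
    rcases h with rfl | rfl | rfl | rfl
    · rw [hvn, hre1, hccn, norm_div, abs_formula α t 1 (β ^ n * ρ) hα ht0 hc0]
      exact main_eq α ρ β s t hα hρ hs2 hs1 hβ1 hβpos n n htdef 1 (by norm_num) hz1
    · rw [hvn, hre2, hccn, norm_div, abs_formula α t (-1) (β ^ n * ρ) hα ht0 hc0]
      exact main_eq α ρ β s t hα hρ hs2 hs1 hβ1 hβpos n n htdef (-1) (by norm_num) hz1
    · rw [hvn, hre1, hccn', norm_div, abs_formula α t 1 (β ^ (n-1) * ρ) hα ht0 hc0']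
      exact main_eq α ρ β s t hα hρ hs2 hs1 hβ1 hβpos n (n-1) htdef 1 (by norm_num) hz2
    · rw [hvn, hre2, hccn', norm_div, abs_formula α t (-1) (β ^ (n-1) * ρ) hα ht0 hc0']
      exact main_eq α ρ β s t hα hρ hs2 hs1 hβ1 hβpos n (n-1) htdef (-1) (by norm_num) hz2
end
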